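/- arXiv:1304.3284 — 8 statements merged into one kernel-verified Lean document; each statement's English description precedes it below -/
import Mathlib

section
/- Let (S, 𝒮, μ) be a σ-finite measure space and let ζ, β, η : S → (0,∞) be measurable functions with ∫ ζβ dμ < ∞ and ∫ ηβ dμ < ∞, both integrals strictly positive. Suppose that for every measurable γ : S → ℝ with |γ| ≤ β and ∫ ζγ dμ = 0 one has ∫ ηγ dμ = 0. Then ζ = (∫ζβ dμ / ∫ηβ dμ) · η, μ-almost everywhere. -/
open MeasureTheory

/-- On a σ-finite measure space, if `ζ, β, η > 0` are measurable with
`∫ ζβ dμ < ∞` and `∫ ηβ dμ < ∞` (both integrals strictly positive), and if every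
measurable `γ` with `|γ| ≤ β` and `∫ ζγ dμ = 0` satisfies `∫ ηγ dμ = 0`, then
`ζ = (∫ζβ dμ / ∫ηβ dμ) · η` μ-a.e. -/
theorem proportional_of_test_directions
    {S : Type*} [MeasurableSpace S] (μ : Measure S) [SigmaFinite μ]
    (ζ β η : S → ℝ) (hζm : Measurable ζ) (hβm : Measurable β) (hηm : Measurable η)
    (hζpos : ∀ s, 0 < ζ s) (hβpos : ∀ s, 0 < β s) (hηpos : ∀ s, 0 < η s)
    (hζβ : Integrable (fun s => ζ s * β s) μ)
    (hηβ : Integrable (fun s => η s * β s) μ)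
    (hζβpos : 0 < ∫ s, ζ s * β s ∂μ)
    (hηβpos : 0 < ∫ s, η s * β s ∂μ)
    (htest : ∀ γ : S → ℝ, Measurable γ → (∀ s, |γ s| ≤ β s) →
      (∫ s, ζ s * γ s ∂μ) = 0 → (∫ s, η s * γ s ∂μ) = 0) :
    ζ =ᵐ[μ] fun s => ((∫ s, ζ s * β s ∂μ) / (∫ s, η s * β s ∂μ)) * η s := by
  set I := ∫ s, ζ s * β s ∂μ with hI
  set J := ∫ s, η s * β s ∂μ with hJ
  -- key: for every measurable set A, ∫_A ζβ = (I/J) ∫_A ηβ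
  have key : ∀ A : Set S, MeasurableSet A →
      ∫ s in A, ζ s * β s ∂μ = (I / J) * ∫ s in A, η s * β s ∂μ := by
    intro A hA
    set c : ℝ := (∫ s in A, ζ s * β s ∂μ) / I with hc
    have hc0 : 0 ≤ c := div_nonneg
      (setIntegral_nonneg hA fun s _ => le_of_lt (mul_pos (hζpos s) (hβpos s)))
      hζβpos.le
    have hc1 : c ≤ 1 := by
      rw [hc, div_le_one hζβpos]
      exact setIntegral_le_integral hζβ
        (Filter.Eventually.of_forall fun s => le_of_lt (mul_pos (hζpos s) (hβpos s)))
    set γ : S → ℝ := fun s => β s * (A.indicator (fun _ => (1:ℝ)) s - c) with hγ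
    have hγm : Measurable γ :=
      hβm.mul ((measurable_one.indicator hA).sub measurable_const)
    have hγle : ∀ s, |γ s| ≤ β s := by
      intro s
      rw [hγ]
      simp only [abs_mul, abs_of_pos (hβpos s)]
      have : |A.indicator (fun _ => (1:ℝ)) s - c| ≤ 1 := by
        rw [abs_le]
        by_cases hs : s ∈ A <;> simp [Set.indicator_of_mem, Set.indicator_of_notMem, hs] <;>
          constructor <;> linarith
      calc β s * |A.indicator (fun _ => (1:ℝ)) s - c| ≤ β s * 1 :=
            mul_le_mul_of_nonneg_left this (hβpos s).le
        _ = β s := mul_one _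
    -- rewrite f * γ for f = ζ, η
    have hrw : ∀ f : S → ℝ, (fun s => f s * γ s) =
        fun s => A.indicator (fun s => f s * β s) s - c * (f s * β s) := by
      intro f
      funext s
      rw [hγ]
      by_cases hs : s ∈ A <;>
        simp [Set.indicator_of_mem, Set.indicator_of_notMem, hs] <;> ring
    have hint : ∀ f : S → ℝ, Integrable (fun s => f s * β s) μ →
        ∫ s, f s * γ s ∂μ = ∫ s in A, f s * β s ∂μ - c * ∫ s, f s * β s ∂μ := by
      intro f hfint
      rw [hrw f, integral_sub (hfint.indicator hA) (hfint.const_mul c),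
        integral_indicator hA, integral_const_mul]
    have hζγ : ∫ s, ζ s * γ s ∂μ = 0 := by
      rw [hint ζ hζβ, hc, div_mul_cancel₀ _ (ne_of_gt hζβpos)]
      ring
    have hηγ := htest γ hγm hγle hζγ
    rw [hint η hηβ] at hηγ
    have hA' : ∫ s in A, η s * β s ∂μ = c * J := by linarith
    rw [hA', hc]
    field_simp
  -- conclude a.e. equality of ζβ and (I/J) ηβ
  have hae : (fun s => ζ s * β s) =ᵐ[μ] (fun s => (I / J) * (η s * β s)) := by
    refine Integrable.ae_eq_of_forall_setIntegral_eq _ _ hζβ (hηβ.const_mul _) ?_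
    intro A hA _
    rw [key A hA, integral_const_mul]
  filter_upwards [hae] with s hs
  have hβne : β s ≠ 0 := (hβpos s).ne'
  have : ζ s * β s = ((I / J) * η s) * β s := by rw [hs]; ring
  exact mul_right_cancel₀ hβne this
end

section
/- Let U_1,...,U_M : (0,∞) → ℝ be strictly increasing, strictly concave, continuously differentiable, and satisfy the Inada conditions. Then for each fixed w in the interior of the simplex Σ^M, the aggregate utility function c ↦ U(w,c) = sup{ Σ_m w^m U_m(c^m) : c^m ≥ 0, Σ_m c^m = c } is itself strictly increasing, strictly concave, continuously differentiable on (0,∞), and satisfies the Inada conditions: U_c(w,c) → 0 as c → ∞ and U_c(w,c) → ∞ as c → 0+. -/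
open Finset

open Filter Set


/-- A strictly antitone function on `(0,∞)`, positive and surjective onto `(0,∞)`,
is continuous there. -/
lemma aux_cont_of_anti_surj {f : ℝ → ℝ} (hanti : StrictAntiOn f (Set.Ioi 0))
    (hpos : ∀ x, 0 < x → 0 < f x)
    (hsurj : ∀ y, 0 < y → ∃ x, 0 < x ∧ f x = y) :
    ContinuousOn f (Set.Ioi 0) := by
  intro c hc
  have hc' : (0:ℝ) < c := hc
  rw [Metric.continuousWithinAt_iff]
  intro ε hε
  set ε' : ℝ := min (ε/2) (f c / 2) with hε'def
  have hfc : 0 < f c := hpos c hc'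
  have hε'pos : 0 < ε' := lt_min (by linarith) (by linarith)
  have hε'le : ε' ≤ ε / 2 := min_le_left _ _
  have hε'le2 : ε' ≤ f c / 2 := min_le_right _ _
  obtain ⟨c1, hc1pos, hc1⟩ := hsurj (f c + ε') (by linarith)
  obtain ⟨c2, hc2pos, hc2⟩ := hsurj (f c - ε') (by linarith)
  have h1 : c1 < c := by
    rcases lt_trichotomy c1 c with h | rfl | h
    · exact h
    · linarith
    · have := hanti hc (Set.mem_Ioi.2 hc1pos) h
      linarith
  have h2 : c < c2 := by
    rcases lt_trichotomy c c2 with h | rfl | h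
    · exact h
    · linarith
    · have := hanti (Set.mem_Ioi.2 hc2pos) hc h
      linarith
  refine ⟨min (c - c1) (c2 - c), lt_min (by linarith) (by linarith), fun x hx hxd => ?_⟩
  have hx0 : (0:ℝ) < x := hx
  rw [Real.dist_eq] at hxd ⊢
  have hd1 : c1 < x := by
    have := (abs_lt.1 (lt_of_lt_of_le hxd (min_le_left _ _))).1
    linarith
  have hd2 : x < c2 := by
    have := (abs_lt.1 (lt_of_lt_of_le hxd (min_le_right _ _))).2
    linarith
  have hfx1 : f x < f c + ε' := by
    have := hanti (Set.mem_Ioi.2 hc1pos) (Set.mem_Ioi.2 hx0) hd1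
    linarith
  have hfx2 : f c - ε' < f x := by
    have := hanti (Set.mem_Ioi.2 hx0) (Set.mem_Ioi.2 hc2pos) hd2
    linarith
  have : |f x - f c| < ε' := abs_lt.2 ⟨by linarith, by linarith⟩
  linarith

/-- The tangent-line inequality for a strictly concave differentiable function, positive
arguments. -/
lemma aux_tangent_pos {f f' : ℝ → ℝ}
    (hconc : StrictConcaveOn ℝ (Set.Ioi 0) f)
    (hderiv : ∀ c : ℝ, 0 < c → HasDerivAt f (f' c) c) :
    ∀ x, 0 < x → ∀ y, 0 < y → f y ≤ f x + f' x * (y - x) := by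
  intro x hx y hy
  rcases lt_trichotomy x y with hxy | rfl | hyx
  · have h := hconc.slope_lt_of_hasDerivAt (Set.mem_Ioi.2 hx) (Set.mem_Ioi.2 hy) hxy
      (hderiv x hx)
    rw [slope_def_field] at h
    have h2 : f y - f x < f' x * (y - x) := by
      have := (div_lt_iff₀ (by linarith : (0:ℝ) < y - x)).1 h
      linarith
    linarith
  · simp
  · have h := hconc.lt_slope_of_hasDerivAt (Set.mem_Ioi.2 hy) (Set.mem_Ioi.2 hx) hyx
      (hderiv x hx)
    rw [slope_def_field] at h
    have h2 : f' x * (x - y) < f x - f y := by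
      have := (lt_div_iff₀ (by linarith : (0:ℝ) < x - y)).1 h
      linarith
    have h3 : f' x * (y - x) = -(f' x * (x - y)) := by ring
    linarith

/-- Tangent-line inequality extended to `y = 0`. -/
lemma aux_tangent {f f' : ℝ → ℝ}
    (hconc : StrictConcaveOn ℝ (Set.Ioi 0) f)
    (hderiv : ∀ c : ℝ, 0 < c → HasDerivAt f (f' c) c)
    (h0 : ∀ c : ℝ, 0 < c → f 0 ≤ f c) :
    ∀ x, 0 < x → ∀ y, 0 ≤ y → f y ≤ f x + f' x * (y - x) := by
  intro x hx y hy
  rcases hy.lt_or_eq with hy' | rfl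
  · exact aux_tangent_pos hconc hderiv x hx y hy'
  · have hlim : Tendsto (fun t : ℝ => f x + f' x * (t - x)) (nhdsWithin 0 (Set.Ioi 0))
        (nhds (f x + f' x * ((0:ℝ) - x))) := by
      apply Filter.Tendsto.mono_left _ nhdsWithin_le_nhds
      exact (Continuous.tendsto (by continuity) 0)
    have hev : ∀ᶠ t in nhdsWithin (0:ℝ) (Set.Ioi 0), f 0 ≤ f x + f' x * (t - x) := by
      filter_upwards [Ioo_mem_nhdsGT_of_mem (Set.left_mem_Ico.2 hx)] with t ht
      exact (h0 t ht.1).trans (aux_tangent_pos hconc hderiv x hx t ht.1)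
    exact ge_of_tendsto hlim hev

/-- The derivative of a strictly concave function is strictly antitone. -/
lemma aux_deriv_anti {f f' : ℝ → ℝ}
    (hconc : StrictConcaveOn ℝ (Set.Ioi 0) f)
    (hderiv : ∀ c : ℝ, 0 < c → HasDerivAt f (f' c) c) :
    StrictAntiOn f' (Set.Ioi 0) := by
  intro x hx y hy hxy
  have h1 := hconc.lt_slope_of_hasDerivAt hx hy hxy (hderiv y hy)
  have h2 := hconc.slope_lt_of_hasDerivAt hx hy hxy (hderiv x hx)
  exact h1.trans h2

/-- Positivity of the derivative, from antitonicity and the Inada condition at `∞`. -/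
lemma aux_deriv_pos {f' : ℝ → ℝ}
    (hanti : StrictAntiOn f' (Set.Ioi 0))
    (htop : Tendsto f' atTop (nhds 0)) :
    ∀ x, 0 < x → 0 < f' x := by
  intro x hx
  have h1 : (0:ℝ) ≤ f' (x + 1) := by
    apply le_of_tendsto htop
    filter_upwards [eventually_gt_atTop (x + 1)] with t ht
    exact (hanti (Set.mem_Ioi.2 (by linarith)) (Set.mem_Ioi.2 (by linarith)) ht).le
  have h2 : f' (x+1) < f' x := hanti (Set.mem_Ioi.2 hx) (Set.mem_Ioi.2 (by linarith : (0:ℝ) < x+1)) (by linarith)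
  linarith

/-- Standing assumptions on a utility function `U` with derivative `U'`:
strictly increasing, strictly concave, continuously differentiable on `(0,∞)`,
satisfying the Inada conditions. -/
def StandingAssumptions (U U' : ℝ → ℝ) : Prop :=
  StrictMonoOn U (Set.Ioi (0 : ℝ)) ∧ StrictConcaveOn ℝ (Set.Ioi (0 : ℝ)) U ∧
  (∀ c : ℝ, 0 < c → HasDerivAt U (U' c) c) ∧ ContinuousOn U' (Set.Ioi (0 : ℝ)) ∧
  Filter.Tendsto U' Filter.atTop (nhds 0) ∧
  Filter.Tendsto U' (nhdsWithin 0 (Set.Ioi (0 : ℝ))) Filter.atTop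

/-- For each fixed `w` in the interior of the simplex, the aggregate
utility `c ↦ U(w,c)` (the maximal value of `∑ w^m U_m(c^m)` over allocations of `c`)
is itself strictly increasing, strictly concave, continuously differentiable on
`(0,∞)` and satisfies the Inada conditions; i.e. it satisfies the standing
assumptions for some derivative function. -/
theorem aggregate_utility_satisfies_standing_assumptions
    (M : ℕ) (hM : 0 < M) (U U' : Fin M → ℝ → ℝ)
    (hU : ∀ m, StandingAssumptions (U m) (U' m))
    (hU0 : ∀ m, ∀ c : ℝ, 0 < c → U m 0 ≤ U m c)
    (w : Fin M → ℝ) (hw : ∀ m, 0 < w m) (hw1 : ∑ m, w m = 1)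
    (V : ℝ → ℝ)
    (hV : ∀ c : ℝ, 0 < c →
      IsGreatest {x : ℝ | ∃ p : Fin M → ℝ, (∀ m, 0 ≤ p m) ∧ (∑ m, p m = c) ∧
        x = ∑ m, w m * U m (p m)} (V c)) :
    ∃ V' : ℝ → ℝ, StandingAssumptions V V' := by
  -- basic facts about each U' m
  have hconc : ∀ m, StrictConcaveOn ℝ (Set.Ioi 0) (U m) := fun m => (hU m).2.1
  have hderiv : ∀ m, ∀ c : ℝ, 0 < c → HasDerivAt (U m) (U' m c) c := fun m => (hU m).2.2.1
  have hU'cont : ∀ m, ContinuousOn (U' m) (Set.Ioi 0) := fun m => (hU m).2.2.2.1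
  have hU'top : ∀ m, Tendsto (U' m) atTop (nhds 0) := fun m => (hU m).2.2.2.2.1
  have hU'0 : ∀ m, Tendsto (U' m) (nhdsWithin 0 (Set.Ioi 0)) atTop := fun m => (hU m).2.2.2.2.2
  have hU'anti : ∀ m, StrictAntiOn (U' m) (Set.Ioi 0) :=
    fun m => aux_deriv_anti (hconc m) (hderiv m)
  have hU'pos : ∀ m, ∀ x, 0 < x → 0 < U' m x :=
    fun m => aux_deriv_pos (hU'anti m) (hU'top m)
  -- the weighted marginal utilities g m
  set g : Fin M → ℝ → ℝ := fun m x => w m * U' m x with hg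
  have gpos : ∀ m, ∀ x, 0 < x → 0 < g m x := fun m x hx => mul_pos (hw m) (hU'pos m x hx)
  have ganti : ∀ m, StrictAntiOn (g m) (Set.Ioi 0) := by
    intro m x hx y hy hxy
    exact mul_lt_mul_of_pos_left (hU'anti m hx hy hxy) (hw m)
  have gcont : ∀ m, ContinuousOn (g m) (Set.Ioi 0) :=
    fun m => continuousOn_const.mul (hU'cont m)
  have gtop : ∀ m, Tendsto (g m) (nhdsWithin 0 (Set.Ioi 0)) atTop :=
    fun m => (hU'0 m).const_mul_atTop (hw m)
  have g0 : ∀ m, Tendsto (g m) atTop (nhds 0) := by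
    intro m
    have := (hU'top m).const_mul (w m)
    rwa [mul_zero] at this
  -- surjectivity of g m onto (0,∞)
  have gsurj : ∀ m, ∀ y, 0 < y → ∃ x, 0 < x ∧ g m x = y := by
    intro m y hy
    obtain ⟨a, hga, ha⟩ := (((gtop m).eventually_ge_atTop (y + 1)).and
      eventually_mem_nhdsWithin).exists
    have ha0 : (0:ℝ) < a := ha
    obtain ⟨b, hgb, hab⟩ := (((g0 m).eventually_lt_const hy).and
      (eventually_ge_atTop (a + 1))).exists
    have hab' : a ≤ b := by linarith
    have hmem : y ∈ Set.Icc (g m b) (g m a) := ⟨hgb.le, by linarith⟩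
    have hsub : Set.Icc a b ⊆ Set.Ioi 0 := fun t ht => lt_of_lt_of_le ha0 ht.1
    obtain ⟨x, hx, hgx⟩ := intermediate_value_Icc' hab' ((gcont m).mono hsub) hmem
    exact ⟨x, lt_of_lt_of_le ha0 hx.1, hgx⟩
  -- the inverse functions ψ m
  obtain ⟨ψ, hψ⟩ : ∃ ψ : Fin M → ℝ → ℝ, ∀ m, ∀ y, 0 < y → 0 < ψ m y ∧ g m (ψ m y) = y := by
    refine ⟨fun m y => if h : 0 < y then (gsurj m y h).choose else 1, fun m y hy => ?_⟩
    simp only [dif_pos hy]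
    exact (gsurj m y hy).choose_spec
  have ψpos : ∀ m, ∀ y, 0 < y → 0 < ψ m y := fun m y hy => (hψ m y hy).1
  have ψg : ∀ m, ∀ y, 0 < y → g m (ψ m y) = y := fun m y hy => (hψ m y hy).2
  have ψanti : ∀ m, StrictAntiOn (ψ m) (Set.Ioi 0) := by
    intro m y hy y' hy' hyy'
    by_contra h
    push_neg at h
    have := (ganti m).antitoneOn (Set.mem_Ioi.2 (ψpos m y hy)) (Set.mem_Ioi.2 (ψpos m y' hy')) h
    rw [ψg m y hy, ψg m y' hy'] at this
    exact absurd this (not_le.2 hyy')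
  have ψsec : ∀ m, ∀ x, 0 < x → ψ m (g m x) = x := by
    intro m x hx
    have h1 := ψg m (g m x) (gpos m x hx)
    exact (ganti m).injOn (Set.mem_Ioi.2 (ψpos m _ (gpos m x hx))) (Set.mem_Ioi.2 hx) h1
  have ψsurj : ∀ m, ∀ x, 0 < x → ∃ y, 0 < y ∧ ψ m y = x :=
    fun m x hx => ⟨g m x, gpos m x hx, ψsec m x hx⟩
  have ψcont : ∀ m, ContinuousOn (ψ m) (Set.Ioi 0) :=
    fun m => aux_cont_of_anti_surj (ψanti m) (ψpos m) (ψsurj m)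
  -- the aggregate demand F
  set F : ℝ → ℝ := fun y => ∑ m, ψ m y with hF
  have hne : (Finset.univ : Finset (Fin M)).Nonempty := ⟨⟨0, hM⟩, Finset.mem_univ _⟩
  have Fpos : ∀ y, 0 < y → 0 < F y :=
    fun y hy => Finset.sum_pos (fun m _ => ψpos m y hy) hne
  have Fanti : StrictAntiOn F (Set.Ioi 0) := by
    intro y hy y' hy' hyy'
    exact Finset.sum_lt_sum_of_nonempty hne (fun m _ => ψanti m hy hy' hyy')
  have Fcont : ContinuousOn F (Set.Ioi 0) :=
    continuousOn_finset_sum _ (fun m _ => ψcont m)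
  have Fsurj : ∀ c, 0 < c → ∃ l, 0 < l ∧ F l = c := by
    intro c hc
    set m0 : Fin M := ⟨0, hM⟩
    obtain ⟨l1, hl1, hψl1⟩ := ψsurj m0 c hc
    have hF1 : c ≤ F l1 := by
      rw [← hψl1]
      exact Finset.single_le_sum (f := fun m => ψ m l1)
        (fun m _ => (ψpos m l1 hl1).le) (Finset.mem_univ m0)
    have hMpos : (0:ℝ) < (M:ℝ) := Nat.cast_pos.2 hM
    have hcM : 0 < c / (M:ℝ) := div_pos hc hMpos
    set l2 : ℝ := ∑ m, g m (c / (M:ℝ)) with hl2def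
    have hl2 : 0 < l2 := Finset.sum_pos (fun m _ => gpos m _ hcM) hne
    have hF2 : F l2 ≤ c := by
      have hbound : ∀ m, ψ m l2 ≤ c / (M:ℝ) := by
        intro m
        have hle : g m (c / (M:ℝ)) ≤ l2 :=
          Finset.single_le_sum (f := fun k => g k (c / (M:ℝ)))
            (fun k _ => (gpos k _ hcM).le) (Finset.mem_univ m)
        have := (ψanti m).antitoneOn (Set.mem_Ioi.2 (gpos m _ hcM)) (Set.mem_Ioi.2 hl2) hle
        rwa [ψsec m _ hcM] at this
      calc F l2 ≤ ∑ _m : Fin M, c / (M:ℝ) := Finset.sum_le_sum (fun m _ => hbound m)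
        _ = c := by
          rw [Finset.sum_const, Finset.card_univ, Fintype.card_fin, nsmul_eq_mul]
          field_simp
    have hmem : c ∈ Set.uIcc (F l2) (F l1) := Set.mem_uIcc.2 (Or.inl ⟨hF2, hF1⟩)
    have hsub : Set.uIcc l2 l1 ⊆ Set.Ioi 0 := fun t ht =>
      lt_of_lt_of_le (lt_min hl2 hl1) ht.1
    obtain ⟨x, hx, hFx⟩ := intermediate_value_uIcc (Fcont.mono hsub) hmem
    exact ⟨x, hsub hx, hFx⟩
  -- the multiplier Λ
  obtain ⟨L, hL⟩ : ∃ L : ℝ → ℝ, ∀ c, 0 < c → 0 < L c ∧ F (L c) = c := by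
    refine ⟨fun c => if h : 0 < c then (Fsurj c h).choose else 1, fun c hc => ?_⟩
    simp only [dif_pos hc]
    exact (Fsurj c hc).choose_spec
  have Lpos : ∀ c, 0 < c → 0 < L c := fun c hc => (hL c hc).1
  have FL : ∀ c, 0 < c → F (L c) = c := fun c hc => (hL c hc).2
  have Lanti : StrictAntiOn L (Set.Ioi 0) := by
    intro c hc c' hc' hcc'
    by_contra h
    push_neg at h
    have := Fanti.antitoneOn (Set.mem_Ioi.2 (Lpos c hc)) (Set.mem_Ioi.2 (Lpos c' hc')) h
    rw [FL c hc, FL c' hc'] at this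
    exact absurd this (not_le.2 hcc')
  have LF : ∀ l, 0 < l → L (F l) = l := by
    intro l hl
    have h1 := FL (F l) (Fpos l hl)
    exact Fanti.injOn (Set.mem_Ioi.2 (Lpos _ (Fpos l hl))) (Set.mem_Ioi.2 hl) h1
  have Lsurj : ∀ l, 0 < l → ∃ c, 0 < c ∧ L c = l :=
    fun l hl => ⟨F l, Fpos l hl, LF l hl⟩
  have Lcont : ContinuousOn L (Set.Ioi 0) := aux_cont_of_anti_surj Lanti Lpos Lsurj
  -- Inada conditions for Λ
  have Ltop : Tendsto L atTop (nhds 0) := by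
    rw [tendsto_order]
    constructor
    · intro a ha
      filter_upwards [eventually_gt_atTop (0:ℝ)] with c hc
      exact lt_trans ha (Lpos c hc)
    · intro a ha
      have ha2 : 0 < a / 2 := by linarith
      filter_upwards [eventually_gt_atTop (F (a/2))] with c hc
      have hc0 : (0:ℝ) < c := lt_trans (Fpos _ ha2) hc
      have := Lanti (Set.mem_Ioi.2 (Fpos _ ha2)) (Set.mem_Ioi.2 hc0) hc
      rw [LF _ ha2] at this
      linarith
  have L0 : Tendsto L (nhdsWithin 0 (Set.Ioi 0)) atTop := by
    rw [tendsto_atTop]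
    intro b
    set b' : ℝ := max b 1 with hb'def
    have hb' : 0 < b' := lt_of_lt_of_le one_pos (le_max_right _ _)
    filter_upwards [Ioo_mem_nhdsGT_of_mem (Set.left_mem_Ico.2 (Fpos b' hb'))] with c hc
    have := Lanti (Set.mem_Ioi.2 hc.1) (Set.mem_Ioi.2 (Fpos b' hb')) hc.2
    rw [LF b' hb'] at this
    calc b ≤ b' := le_max_left _ _
      _ ≤ L c := this.le
  -- the upper tangent bound for V
  have keyle : ∀ c, 0 < c → ∀ p : Fin M → ℝ, (∀ m, 0 ≤ p m) →
      ∑ m, w m * U m (p m) ≤ (∑ m, w m * U m (ψ m (L c))) + L c * ((∑ m, p m) - c) := by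
    intro c hc p hp
    have hLc := Lpos c hc
    have hq : ∀ m, w m * U' m (ψ m (L c)) = L c := fun m => ψg m (L c) hLc
    have hqpos : ∀ m, 0 < ψ m (L c) := fun m => ψpos m (L c) hLc
    have hterm : ∀ m, w m * U m (p m) ≤ w m * U m (ψ m (L c)) + L c * (p m - ψ m (L c)) := by
      intro m
      have ht := aux_tangent (hconc m) (hderiv m) (hU0 m) (ψ m (L c)) (hqpos m) (p m) (hp m)
      have h2 := mul_le_mul_of_nonneg_left ht (hw m).le
      have h3 : w m * (U m (ψ m (L c)) + U' m (ψ m (L c)) * (p m - ψ m (L c)))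
          = w m * U m (ψ m (L c)) + (w m * U' m (ψ m (L c))) * (p m - ψ m (L c)) := by ring
      rw [h3, hq m] at h2
      exact h2
    calc ∑ m, w m * U m (p m)
        ≤ ∑ m, (w m * U m (ψ m (L c)) + L c * (p m - ψ m (L c))) :=
          Finset.sum_le_sum (fun m _ => hterm m)
      _ = (∑ m, w m * U m (ψ m (L c))) + L c * ((∑ m, p m) - ∑ m, ψ m (L c)) := by
          rw [Finset.sum_add_distrib, ← Finset.mul_sum, Finset.sum_sub_distrib]
      _ = (∑ m, w m * U m (ψ m (L c))) + L c * ((∑ m, p m) - c) := by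
          rw [show (∑ m, ψ m (L c)) = F (L c) from rfl, FL c hc]
  -- the formula for V
  have Vform : ∀ c, 0 < c → V c = ∑ m, w m * U m (ψ m (L c)) := by
    intro c hc
    obtain ⟨⟨p, hp0, hps, hpe⟩, hub⟩ := hV c hc
    refine le_antisymm ?_ ?_
    · rw [hpe]
      have := keyle c hc p hp0
      rw [hps] at this
      simpa using this
    · refine hub ⟨fun m => ψ m (L c), fun m => (ψpos m (L c) (Lpos c hc)).le, ?_, rfl⟩
      rw [show (∑ m, ψ m (L c)) = F (L c) from rfl, FL c hc]
  -- key inequality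
  have key : ∀ c, 0 < c → ∀ c', 0 < c' → V c' ≤ V c + L c * (c' - c) := by
    intro c hc c' hc'
    obtain ⟨p', hp0', hps', hpe'⟩ := (hV c' hc').1
    rw [hpe', Vform c hc]
    have := keyle c hc p' hp0'
    rwa [hps'] at this
  -- V is differentiable with derivative Λ
  have hasD : ∀ c, 0 < c → HasDerivAt V (L c) c := by
    intro c hc
    apply HasDerivWithinAt.hasDerivAt (s := Set.Ioi 0) _ (Ioi_mem_nhds hc)
    rw [hasDerivWithinAt_iff_tendsto_slope]
    have hLt : Tendsto L (nhdsWithin c (Set.Ioi 0 \ {c})) (nhds (L c)) :=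
      ((Lcont c hc).mono_left (nhdsWithin_mono c Set.diff_subset))
    have hlow : Tendsto (fun x => min (L c) (L x)) (nhdsWithin c (Set.Ioi 0 \ {c}))
        (nhds (L c)) := by
      have := (tendsto_const_nhds (x := L c) (f := nhdsWithin c (Set.Ioi 0 \ {c}))).min hLt
      rwa [min_self] at this
    have hhigh : Tendsto (fun x => max (L c) (L x)) (nhdsWithin c (Set.Ioi 0 \ {c}))
        (nhds (L c)) := by
      have := (tendsto_const_nhds (x := L c) (f := nhdsWithin c (Set.Ioi 0 \ {c}))).max hLt
      rwa [max_self] at this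
    apply tendsto_of_tendsto_of_tendsto_of_le_of_le' hlow hhigh
    · filter_upwards [self_mem_nhdsWithin] with x hx
      obtain ⟨hx0, hxc⟩ := hx
      have hx0' : (0:ℝ) < x := hx0
      have hxc' : x ≠ c := hxc
      rw [slope_def_field]
      have h1 : V x - V c ≤ L c * (x - c) := by have := key c hc x hx0'; linarith
      have h2 : L x * (x - c) ≤ V x - V c := by have := key x hx0' c hc; nlinarith [key x hx0' c hc]
      rcases lt_or_gt_of_ne hxc' with hlt | hgt
      · -- x < c : L c ≤ slope
        refine le_trans (min_le_left _ _) ?_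
        rw [le_div_iff_of_neg (by linarith : x - c < 0)]
        linarith
      · -- c < x : L x ≤ slope
        refine le_trans (min_le_right _ _) ?_
        rw [le_div_iff₀ (by linarith : (0:ℝ) < x - c)]
        linarith
    · filter_upwards [self_mem_nhdsWithin] with x hx
      obtain ⟨hx0, hxc⟩ := hx
      have hx0' : (0:ℝ) < x := hx0
      have hxc' : x ≠ c := hxc
      rw [slope_def_field]
      have h1 : V x - V c ≤ L c * (x - c) := by have := key c hc x hx0'; linarith
      have h2 : L x * (x - c) ≤ V x - V c := by have := key x hx0' c hc; nlinarith [key x hx0' c hc]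
      rcases lt_or_gt_of_ne hxc' with hlt | hgt
      · -- x < c : L x ≥ slope??  need slope ≤ max; here L c ≥ slope? no: slope ≥ L c; slope ≤ L x
        refine le_trans ?_ (le_max_right _ _)
        rw [div_le_iff_of_neg (by linarith : x - c < 0)]
        linarith
      · refine le_trans ?_ (le_max_left _ _)
        rw [div_le_iff₀ (by linarith : (0:ℝ) < x - c)]
        linarith
  -- assemble
  have Vcont : ContinuousOn V (Set.Ioi 0) :=
    fun x hx => (hasD x hx).continuousAt.continuousWithinAt
  refine ⟨L, ?_, ?_, hasD, Lcont, Ltop, L0⟩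
  · apply strictMonoOn_of_deriv_pos (convex_Ioi 0) Vcont
    rw [interior_Ioi]
    intro x hx
    rw [(hasD x hx).deriv]
    exact Lpos x hx
  · apply StrictAntiOn.strictConcaveOn_of_deriv (convex_Ioi 0) Vcont
    rw [interior_Ioi]
    intro x hx y hy hxy
    rw [(hasD x hx).deriv, (hasD y hy).deriv]
    exact Lanti hx hy hxy
end

section
/- Let U_1,...,U_M : (0,∞) → ℝ satisfy the standing assumptions and fix c > 0. Then the optimal-allocation map w ↦ π^m(w,c) is strictly increasing in w^m and strictly decreasing in w^l for every l ≠ m, on the interior of the simplex Σ^M. -/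
open Finset

lemma SA_deriv_strictAnti {U U' : ℝ → ℝ} (h : StandingAssumptions U U') :
    StrictAntiOn U' (Set.Ioi (0:ℝ)) := by
  intro x hx y hy hxy
  have h1 := h.2.1.slope_lt_of_hasDerivAt hx hy hxy (h.2.2.1 x hx)
  have h2 := h.2.1.lt_slope_of_hasDerivAt hx hy hxy (h.2.2.1 y hy)
  linarith

lemma SA_deriv_pos {U U' : ℝ → ℝ} (h : StandingAssumptions U U') {x : ℝ} (hx : 0 < x) :
    0 < U' x := by
  have hy : x < x + 1 := by linarith
  have hy' : x + 1 ∈ Set.Ioi (0:ℝ) := by simp; linarith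
  have h1 := h.2.1.slope_lt_of_hasDerivAt hx hy' hy (h.2.2.1 x hx)
  have hs : 0 < slope U x (x+1) := by
    rw [slope_def_field]
    have := h.1 hx hy' hy
    have h0 : (0:ℝ) < x + 1 - x := by linarith
    exact div_pos (by linarith) h0
  linarith

lemma SA_incr_lower {U U' : ℝ → ℝ} (h : StandingAssumptions U U') {x y : ℝ}
    (hx : 0 < x) (hxy : x < y) : (y - x) * U' y < U y - U x := by
  have hy : 0 < y := lt_trans hx hxy
  have := h.2.1.lt_slope_of_hasDerivAt (Set.mem_Ioi.2 hx) (Set.mem_Ioi.2 hy) hxy (h.2.2.1 y hy)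
  rw [slope_def_field] at this
  have h0 : 0 < y - x := by linarith
  have := (lt_div_iff₀ h0).mp this
  linarith

lemma SA_incr_upper {U U' : ℝ → ℝ} (h : StandingAssumptions U U') {x y : ℝ}
    (hx : 0 < x) (hxy : x < y) : U y - U x < (y - x) * U' x := by
  have hy : 0 < y := lt_trans hx hxy
  have := h.2.1.slope_lt_of_hasDerivAt (Set.mem_Ioi.2 hx) (Set.mem_Ioi.2 hy) hxy (h.2.2.1 x hx)
  rw [slope_def_field] at this
  have h0 : 0 < y - x := by linarith
  have := (div_lt_iff₀ h0).mp this
  linarith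

lemma sum_shift_two {M : ℕ} (f g : Fin M → ℝ) (i j : Fin M) (hij : i ≠ j)
    (h : ∀ x, x ≠ i → x ≠ j → f x = g x) :
    ∑ x, f x = ∑ x, g x + (f i - g i) + (f j - g j) := by
  have key : ∑ x, (f x - g x) = ∑ x ∈ ({i, j} : Finset (Fin M)), (f x - g x) := by
    refine (Finset.sum_subset (Finset.subset_univ _) ?_).symm
    intro x _ hx
    simp only [Finset.mem_insert, Finset.mem_singleton, not_or] at hx
    rw [h x hx.1 hx.2]; ring
  rw [Finset.sum_pair hij] at key
  have hsub : ∑ x, (f x - g x) = ∑ x, f x - ∑ x, g x := Finset.sum_sub_distrib _ _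
  linarith

lemma maximizer_interior_foc (M : ℕ) (U U' : Fin M → ℝ → ℝ)
    (hU : ∀ m, StandingAssumptions (U m) (U' m))
    (hU0 : ∀ m, ∀ c : ℝ, 0 < c → U m 0 ≤ U m c)
    (c : ℝ) (hc : 0 < c) (w : Fin M → ℝ) (hw : ∀ l, 0 < w l)
    (p : Fin M → ℝ) (hpos : ∀ l, 0 ≤ p l) (hsum : ∑ l, p l = c)
    (hopt : ∀ q : Fin M → ℝ, (∀ l, 0 ≤ q l) → (∑ l, q l = c) →
      ∑ l, w l * U l (q l) ≤ ∑ l, w l * U l (p l)) :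
    (∀ l, 0 < p l) ∧ ∀ i j, w i * U' i (p i) = w j * U' j (p j) := by
  have hppos : ∀ l, 0 < p l := by
    by_contra hcon
    push_neg at hcon
    obtain ⟨l, hl⟩ := hcon
    have hl0 : p l = 0 := le_antisymm hl (hpos l)
    have hk : ∃ k, 0 < p k := by
      by_contra hk; push_neg at hk
      have : ∑ x, p x ≤ 0 := Finset.sum_nonpos (fun x _ => hk x)
      linarith
    obtain ⟨k, hkpos⟩ := hk
    have hkl : k ≠ l := by rintro rfl; rw [hl0] at hkpos; exact lt_irrefl _ hkpos
    set B := 2 * w k * U' k (p k / 2) / w l with hB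
    have hev : ∀ᶠ t in nhdsWithin 0 (Set.Ioi (0:ℝ)),
        (B < U' l t ∧ t < p k / 2) ∧ t ∈ Set.Ioi (0:ℝ) := by
      have h1 : ∀ᶠ t in nhdsWithin 0 (Set.Ioi (0:ℝ)), B < U' l t :=
        (hU l).2.2.2.2.2.eventually_gt_atTop B
      have h2 : ∀ᶠ t in nhdsWithin 0 (Set.Ioi (0:ℝ)), t < p k / 2 := by
        have : ∀ᶠ t in nhds (0:ℝ), t < p k / 2 :=
          Filter.eventually_of_mem (Iio_mem_nhds (by linarith)) (fun x hx => hx)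
        exact this.filter_mono nhdsWithin_le_nhds
      exact (h1.and h2).and self_mem_nhdsWithin
    obtain ⟨δ, ⟨hδB, hδk⟩, hδ0⟩ := hev.exists
    have hδpos : 0 < δ := hδ0
    set q : Fin M → ℝ := fun x => if x = l then δ else if x = k then p k - δ else p x with hqdef
    have hagree : ∀ x, x ≠ l → x ≠ k → q x = p x := by
      intro x h1 h2; simp [hqdef, h1, h2]
    have hql : q l = δ := by simp [hqdef]
    have hqk : q k = p k - δ := by simp [hqdef, hkl]
    have hqnn : ∀ x, 0 ≤ q x := by
      intro x
      rcases eq_or_ne x l with rfl | h1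
      · rw [hql]; linarith
      rcases eq_or_ne x k with rfl | h2
      · rw [hqk]; linarith
      · rw [hagree x h1 h2]; exact hpos x
    have hqsum : ∑ x, q x = c := by
      have := sum_shift_two q p l k hkl.symm hagree
      rw [hql, hqk, hl0, hsum] at this
      rw [this]; ring
    have hle := hopt q hqnn hqsum
    have hsplit := sum_shift_two (fun x => w x * U x (q x)) (fun x => w x * U x (p x))
      l k hkl.symm (fun x h1 h2 => by show w x * U x (q x) = w x * U x (p x); rw [hagree x h1 h2])
    simp only [hql, hqk, hl0] at hsplit
    -- gain bound
    have hgain : (δ/2) * U' l δ < U l δ - U l 0 := by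
      have h0 : U l 0 ≤ U l (δ/2) := hU0 l (δ/2) (by linarith)
      have := SA_incr_lower (hU l) (x := δ/2) (y := δ) (by linarith) (by linarith)
      have e : δ - δ/2 = δ/2 := by ring
      rw [e] at this; linarith
    -- loss bound
    have hloss : U k (p k) - U k (p k - δ) < δ * U' k (p k / 2) := by
      have h1 := SA_incr_upper (hU k) (x := p k - δ) (y := p k) (by linarith) (by linarith)
      have e : p k - (p k - δ) = δ := by ring
      rw [e] at h1
      have h2 : U' k (p k - δ) < U' k (p k / 2) :=
        SA_deriv_strictAnti (hU k) (Set.mem_Ioi.2 (by linarith)) (Set.mem_Ioi.2 (by linarith))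
          (by linarith)
      nlinarith
    have hBmul : 2 * w k * U' k (p k / 2) < U' l δ * w l := (div_lt_iff₀ (hw l)).mp hδB
    have hUkpos : 0 < U' k (p k / 2) := SA_deriv_pos (hU k) (by linarith)
    have hgt : ∑ x, w x * U x (p x) < ∑ x, w x * U x (q x) := by
      rw [hsplit]
      have hwl := hw l
      have hwk := hw k
      nlinarith [mul_lt_mul_of_pos_left hgain (hw l), mul_lt_mul_of_pos_left hloss (hw k)]
    linarith
  refine ⟨hppos, fun i j => ?_⟩
  rcases eq_or_ne i j with rfl | hij
  · rfl
  set f : ℝ → ℝ := fun t => w i * U i (p i + t) + w j * U j (p j - t) with hf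
  have h1 : HasDerivAt (fun t : ℝ => U i (p i + t)) (U' i (p i)) 0 := by
    have hpi : HasDerivAt (U i) (U' i (p i)) (p i + 0) := by
      simpa using (hU i).2.2.1 (p i) (hppos i)
    have hadd : HasDerivAt (fun t : ℝ => p i + t) 1 0 := (hasDerivAt_id 0).const_add (p i)
    simpa [Function.comp_def] using hpi.comp 0 hadd
  have h2 : HasDerivAt (fun t : ℝ => U j (p j - t)) (-U' j (p j)) 0 := by
    have hpj : HasDerivAt (U j) (U' j (p j)) (p j - 0) := by
      simpa using (hU j).2.2.1 (p j) (hppos j)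
    have hsub : HasDerivAt (fun t : ℝ => p j - t) (-1) 0 := (hasDerivAt_id 0).const_sub (p j)
    have := hpj.comp 0 hsub
    simpa [Function.comp_def] using this
  have hd : HasDerivAt f (w i * U' i (p i) - w j * U' j (p j)) 0 := by
    have := (h1.const_mul (w i)).add (h2.const_mul (w j))
    rw [show w i * U' i (p i) - w j * U' j (p j) = w i * U' i (p i) + w j * -U' j (p j) by ring]
    exact this
  have hmax : IsLocalMax f 0 := by
    have hmem : Set.Ioo (-(min (p i) (p j))) (min (p i) (p j)) ∈ nhds (0:ℝ) :=
      Ioo_mem_nhds (by simpa using lt_min (hppos i) (hppos j)) (lt_min (hppos i) (hppos j))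
    filter_upwards [hmem] with t ht
    set q : Fin M → ℝ := fun x => if x = i then p i + t else if x = j then p j - t else p x
      with hqdef
    have hagree : ∀ x, x ≠ i → x ≠ j → q x = p x := by
      intro x hx1 hx2; simp [hqdef, hx1, hx2]
    have hqi : q i = p i + t := by simp [hqdef]
    have hqj : q j = p j - t := by simp [hqdef, hij.symm]
    have hqnn : ∀ x, 0 ≤ q x := by
      intro x
      rcases eq_or_ne x i with rfl | hx1
      · rw [hqi]
        have := min_le_left (p x) (p j)
        have := ht.1
        linarith
      rcases eq_or_ne x j with rfl | hx2
      · rw [hqj]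
        have := min_le_right (p i) (p x)
        have := ht.2
        linarith
      · rw [hagree x hx1 hx2]; exact hpos x
    have hqsum : ∑ x, q x = c := by
      have := sum_shift_two q p i j hij hagree
      rw [hqi, hqj, hsum] at this
      rw [this]; ring
    have hle := hopt q hqnn hqsum
    have hsplit := sum_shift_two (fun x => w x * U x (q x)) (fun x => w x * U x (p x))
      i j hij (fun x hx1 hx2 => by show w x * U x (q x) = w x * U x (p x); rw [hagree x hx1 hx2])
    simp only [hqi, hqj] at hsplit
    show f t ≤ f 0
    simp only [hf, add_zero, sub_zero]
    linarith
  have := hmax.hasDerivAt_eq_zero hd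
  linarith

/-- For fixed `c > 0`, the optimal allocation `π^m(w,c)` is strictly
increasing in `w^m` and strictly decreasing in `w^l` for `l ≠ m`: if `w₁` and `w₂`
are strictly positive weight vectors differing only in the `m`-th coordinate with
`w₁^m < w₂^m`, and `p₁, p₂` are the corresponding optimal allocations of `c`, then
`p₁^m < p₂^m` and `p₂^l < p₁^l` for every `l ≠ m`. -/
theorem optimal_allocation_monotone_in_weights
    (M : ℕ) (hM : 1 < M) (U U' : Fin M → ℝ → ℝ)
    (hU : ∀ m, StandingAssumptions (U m) (U' m))
    (hU0 : ∀ m, ∀ c : ℝ, 0 < c → U m 0 ≤ U m c)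
    (c : ℝ) (hc : 0 < c) (m : Fin M)
    (w₁ w₂ : Fin M → ℝ) (hw₁ : ∀ l, 0 < w₁ l) (hw₂ : ∀ l, 0 < w₂ l)
    (heq : ∀ l, l ≠ m → w₁ l = w₂ l) (hlt : w₁ m < w₂ m)
    (p₁ p₂ : Fin M → ℝ)
    (hp₁pos : ∀ l, 0 ≤ p₁ l) (hp₁sum : ∑ l, p₁ l = c)
    (hp₁opt : ∀ q : Fin M → ℝ, (∀ l, 0 ≤ q l) → (∑ l, q l = c) →
      ∑ l, w₁ l * U l (q l) ≤ ∑ l, w₁ l * U l (p₁ l))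
    (hp₂pos : ∀ l, 0 ≤ p₂ l) (hp₂sum : ∑ l, p₂ l = c)
    (hp₂opt : ∀ q : Fin M → ℝ, (∀ l, 0 ≤ q l) → (∑ l, q l = c) →
      ∑ l, w₂ l * U l (q l) ≤ ∑ l, w₂ l * U l (p₂ l)) :
    p₁ m < p₂ m ∧ ∀ l, l ≠ m → p₂ l < p₁ l := by
  obtain ⟨hpos₁, hfoc₁⟩ :=
    maximizer_interior_foc M U U' hU hU0 c hc w₁ hw₁ p₁ hp₁pos hp₁sum hp₁opt
  obtain ⟨hpos₂, hfoc₂⟩ :=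
    maximizer_interior_foc M U U' hU hU0 c hc w₂ hw₂ p₂ hp₂pos hp₂sum hp₂opt
  have hanti : ∀ l : Fin M, ∀ x y : ℝ, 0 < x → 0 < y → x ≤ y → U' l y ≤ U' l x := by
    intro l x y hx hy hxy
    rcases eq_or_lt_of_le hxy with rfl | h
    · exact le_refl _
    · exact (SA_deriv_strictAnti (hU l) hx hy h).le
  have hrefl : ∀ l : Fin M, ∀ x y : ℝ, 0 < x → 0 < y → U' l x < U' l y → y < x := by
    intro l x y hx hy hltxy
    by_contra h; push_neg at h
    have := hanti l x y hx hy h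
    linarith
  have hpos' : ∀ l : Fin M, ∀ x : ℝ, 0 < x → 0 < U' l x := fun l x hx => SA_deriv_pos (hU l) hx
  have : Nontrivial (Fin M) := Fin.nontrivial_iff_two_le.mpr hM
  obtain ⟨l₀, hl₀⟩ := exists_ne m
  have h1 : p₁ m < p₂ m := by
    by_contra hcon; push_neg at hcon
    have key : ∀ l, l ≠ m → p₂ l < p₁ l := by
      intro l hl
      have e2 := hfoc₂ l m
      have e1 := hfoc₁ l m
      have hUm : U' m (p₁ m) ≤ U' m (p₂ m) := hanti m _ _ (hpos₂ m) (hpos₁ m) hcon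
      have hmul : w₁ l * U' l (p₁ l) < w₂ l * U' l (p₂ l) := by
        rw [e1, e2]
        have h3 := hpos' m (p₁ m) (hpos₁ m)
        nlinarith [hw₁ m, hw₂ m]
      rw [heq l hl] at hmul
      have := lt_of_mul_lt_mul_left hmul (hw₂ l).le
      exact hrefl l _ _ (hpos₁ l) (hpos₂ l) this
    have hsumlt : ∑ x, p₂ x < ∑ x, p₁ x := by
      refine Finset.sum_lt_sum (fun i _ => ?_) ⟨l₀, Finset.mem_univ _, key l₀ hl₀⟩
      rcases eq_or_ne i m with rfl | h
      · exact hcon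
      · exact (key i h).le
    rw [hp₁sum, hp₂sum] at hsumlt
    exact lt_irrefl c hsumlt
  refine ⟨h1, fun l hl => ?_⟩
  by_contra hcon; push_neg at hcon
  have hlam : w₂ l * U' l (p₂ l) ≤ w₁ l * U' l (p₁ l) := by
    rw [← heq l hl]
    exact mul_le_mul_of_nonneg_left (hanti l _ _ (hpos₁ l) (hpos₂ l) hcon) (hw₁ l).le
  have key : ∀ i, i ≠ m → p₁ i ≤ p₂ i := by
    intro i hi
    have e2 := hfoc₂ i l
    have e1 := hfoc₁ i l
    have hmul : w₂ i * U' i (p₂ i) ≤ w₁ i * U' i (p₁ i) := by rw [e1, e2]; exact hlam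
    rw [← heq i hi] at hmul
    have h' : U' i (p₂ i) ≤ U' i (p₁ i) := le_of_mul_le_mul_left hmul (hw₁ i)
    by_contra hc2; push_neg at hc2
    have := SA_deriv_strictAnti (hU i) (Set.mem_Ioi.2 (hpos₂ i)) (Set.mem_Ioi.2 (hpos₁ i)) hc2
    linarith
  have hsumlt : ∑ x, p₁ x < ∑ x, p₂ x := by
    refine Finset.sum_lt_sum (fun i _ => ?_) ⟨m, Finset.mem_univ _, h1⟩
    rcases eq_or_ne i m with rfl | h
    · exact h1.le
    · exact key i h
  rw [hp₁sum, hp₂sum] at hsumlt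
  exact lt_irrefl c hsumlt
end

section
/- Let (S,𝒮,μ) be a σ-finite measure space, Λ : S → (0,∞) measurable, and let (U_m)_{m=1}^M be measurable fields of utility functions satisfying the standing assumptions pointwise in s. Suppose (α^m) is an allocation of Λ (measurable nonnegative functions summing to Λ) with E[|U_m(α^m)|] < ∞ for all m, and suppose there exists w ∈ Σ^M with α^m = π^m(w,Λ) for all m. Then (α^m) is Pareto optimal: no allocation (β^m) of Λ satisfies E[U_m(β^m)] ≥ E[U_m(α^m)] for all m with strict inequality for some m. -/
open Finset MeasureTheory

/-- Extended negative part of an extended real number. -/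
noncomputable def enegpart (x : EReal) : ENNReal :=
  if x = ⊥ then ⊤ else ENNReal.ofReal (-(x.toReal))

/-- Extended positive part of an extended real number. -/
noncomputable def epospart (x : EReal) : ENNReal :=
  if x = ⊤ then ⊤ else ENNReal.ofReal (x.toReal)

/-- Expectation with the paper's convention: `E[f] = -∞` whenever the negative
part of `f` fails to be integrable. -/
noncomputable def eE {S : Type*} [MeasurableSpace S] (μ : Measure S)
    (f : S → EReal) : EReal :=
  if (∫⁻ s, enegpart (f s) ∂μ) = ⊤ then ⊥
  else ((∫⁻ s, epospart (f s) ∂μ : ENNReal) : EReal) -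
    ((∫⁻ s, enegpart (f s) ∂μ : ENNReal) : EReal)

lemma enegpart_coe (r : ℝ) : enegpart (r : EReal) = ENNReal.ofReal (-r) := by
  simp [enegpart]

lemma epospart_coe (r : ℝ) : epospart (r : EReal) = ENNReal.ofReal r := by
  simp [epospart]

lemma ofReal_max_neg (r : ℝ) : ENNReal.ofReal (max r 0) = ENNReal.ofReal r := by
  rcases le_total r 0 with h | h
  · rw [max_eq_right h, ENNReal.ofReal_zero, eq_comm, ENNReal.ofReal_eq_zero]; exact h
  · rw [max_eq_left h]

lemma coe_ennreal_eq_coe_toReal (a : ENNReal) (h : a ≠ ⊤) :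
    (a : EReal) = ((a.toReal : ℝ) : EReal) := by
  conv_lhs => rw [← EReal.coe_toReal (show (a : EReal) ≠ ⊤ by simpa) (by simp)]
  rw [EReal.toReal_coe_ennreal]

lemma eE_coe_of_integrable {S : Type*} [MeasurableSpace S] (μ : Measure S) (f : S → ℝ)
    (hf : Integrable f μ) :
    eE μ (fun s => (f s : EReal)) = ((∫ s, f s ∂μ : ℝ) : EReal) := by
  have hpos : (∫⁻ s, epospart ((f s : EReal)) ∂μ) = ∫⁻ s, ENNReal.ofReal (f s) ∂μ :=
    lintegral_congr fun s => epospart_coe _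
  have hneg : (∫⁻ s, enegpart ((f s : EReal)) ∂μ) = ∫⁻ s, ENNReal.ofReal (-(f s)) ∂μ :=
    lintegral_congr fun s => enegpart_coe _
  have hbound : ∀ g : S → ℝ, (∀ s, g s ≤ |f s|) → (∫⁻ s, ENNReal.ofReal (g s) ∂μ) < ⊤ := by
    intro g hg
    refine lt_of_le_of_lt (lintegral_mono fun s => ?_) hf.2
    calc ENNReal.ofReal (g s) ≤ ENNReal.ofReal |f s| := ENNReal.ofReal_le_ofReal (hg s)
    _ = ‖f s‖₊ := by rw [← Real.norm_eq_abs, ← coe_nnnorm, ENNReal.ofReal_coe_nnreal]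
  have hnlt : (∫⁻ s, ENNReal.ofReal (-(f s)) ∂μ) < ⊤ := hbound _ fun s => neg_le_abs _
  have hplt : (∫⁻ s, ENNReal.ofReal (f s) ∂μ) < ⊤ := hbound _ fun s => le_abs_self _
  rw [eE, hpos, hneg, if_neg hnlt.ne,
    integral_eq_lintegral_pos_part_sub_lintegral_neg_part hf, EReal.coe_sub]
  congr 1
  · rw [coe_ennreal_eq_coe_toReal _ hplt.ne]
  · rw [coe_ennreal_eq_coe_toReal _ hnlt.ne]

lemma eE_congr_ae {S : Type*} [MeasurableSpace S] (μ : Measure S) {f g : S → EReal}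
    (h : f =ᵐ[μ] g) : eE μ f = eE μ g := by
  have h1 : (∫⁻ s, enegpart (f s) ∂μ) = ∫⁻ s, enegpart (g s) ∂μ :=
    lintegral_congr_ae (h.mono fun s hs => by dsimp only; rw [hs])
  have h2 : (∫⁻ s, epospart (f s) ∂μ) = ∫⁻ s, epospart (g s) ∂μ :=
    lintegral_congr_ae (h.mono fun s hs => by dsimp only; rw [hs])
  rw [eE, eE, h1, h2]

lemma negpart_integrable_of_eE_ne_bot {S : Type*} [MeasurableSpace S] (μ : Measure S)
    {f : S → ℝ} (hm : Measurable f)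
    (h : eE μ (fun s => (f s : EReal)) ≠ ⊥) :
    Integrable (fun s => max (-(f s)) 0) μ := by
  have hneg : (∫⁻ s, enegpart ((f s : EReal)) ∂μ) = ∫⁻ s, ENNReal.ofReal (-(f s)) ∂μ :=
    lintegral_congr fun s => enegpart_coe _
  have hfin : (∫⁻ s, ENNReal.ofReal (-(f s)) ∂μ) ≠ ⊤ := by
    intro htop
    rw [eE, hneg, if_pos htop] at h
    exact h rfl
  refine ⟨(hm.neg.max measurable_const).aestronglyMeasurable, ?_⟩
  refine (hasFiniteIntegral_iff_ofReal (f := fun s => max (-(f s)) 0)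
    (Filter.Eventually.of_forall fun s => le_max_right _ _)).2 ?_
  have : (∫⁻ s, ENNReal.ofReal (max (-(f s)) 0) ∂μ) = ∫⁻ s, ENNReal.ofReal (-(f s)) ∂μ :=
    lintegral_congr fun s => ofReal_max_neg _
  rw [this]
  exact lt_top_iff_ne_top.2 hfin

theorem pareto_optimal_of_pointwise_maximizer
    {S : Type*} [MeasurableSpace S] (μ : Measure S) [SigmaFinite μ]
    (M : ℕ) (Λ : S → ℝ) (hΛm : Measurable Λ) (hΛpos : ∀ s, 0 < Λ s)
    (U U' : Fin M → S → ℝ → ℝ)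
    (hUmeas : ∀ m, Measurable (fun p : S × ℝ => U m p.1 p.2))
    (hU : ∀ m, ∀ s, StandingAssumptions (U m s) (U' m s))
    (hU0 : ∀ m, ∀ s, ∀ c : ℝ, 0 < c → U m s 0 ≤ U m s c)
    (α : Fin M → S → ℝ) (hαm : ∀ m, Measurable (α m))
    (hαpos : ∀ m, ∀ s, 0 ≤ α m s) (hαsum : ∀ s, ∑ m, α m s = Λ s)
    (hαint : ∀ m, Integrable (fun s => U m s (α m s)) μ)
    (w : Fin M → ℝ) (hw : w ∈ stdSimplex ℝ (Fin M))
    (hαzero : ∀ m, w m = 0 → ∀ s, α m s = 0)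
    (hαopt : ∀ s, ∀ q : Fin M → ℝ, (∀ m, 0 ≤ q m) → (∑ m, q m = Λ s) →
      ∑ m, w m * U m s (q m) ≤ ∑ m, w m * U m s (α m s)) :
    ¬ ∃ β : Fin M → S → ℝ, (∀ m, Measurable (β m)) ∧
      (∀ m, ∀ s, 0 ≤ β m s) ∧ (∀ s, ∑ m, β m s = Λ s) ∧
      (∀ m, ((∫ s, U m s (α m s) ∂μ : ℝ) : EReal) ≤ eE μ (fun s => (U m s (β m s) : EReal))) ∧
      (∃ l, ((∫ s, U l s (α l s) ∂μ : ℝ) : EReal) < eE μ (fun s => (U l s (β l s) : EReal))) := by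
  rintro ⟨β, hβm, hβpos, hβsum, hβge, l, hβl⟩
  have hwnn : ∀ m, 0 ≤ w m := hw.1
  have hwsum : ∑ m, w m = 1 := hw.2
  -- strict monotonicity including at 0
  have hUlt : ∀ m s a b, 0 ≤ a → a < b → U m s a < U m s b := by
    intro m s a b ha hab
    rcases eq_or_lt_of_le ha with h0 | h0
    · have hb : 0 < b := by linarith
      calc U m s a = U m s 0 := by rw [← h0]
        _ ≤ U m s (b / 2) := hU0 m s _ (by linarith)
        _ < U m s b := (hU m s).1 (Set.mem_Ioi.2 (by linarith)) (Set.mem_Ioi.2 hb) (by linarith)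
    · exact (hU m s).1 (Set.mem_Ioi.2 h0) (Set.mem_Ioi.2 (lt_of_le_of_lt ha hab)) hab
  have hfmeas : ∀ m, Measurable (fun s => U m s (β m s)) := fun m =>
    (hUmeas m).comp (measurable_id.prodMk (hβm m))
  -- negative parts are integrable
  have hN : ∀ m, Integrable (fun s => max (-(U m s (β m s))) 0) μ := by
    intro m
    refine negpart_integrable_of_eE_ne_bot μ (hfmeas m) (fun hbot => ?_)
    have := hβge m
    rw [hbot] at this
    exact absurd this (not_le.2 (EReal.bot_lt_coe _))
  -- pointwise key inequality
  have hkey : ∀ s, ∑ m, w m * U m s (β m s) ≤ ∑ m, w m * U m s (α m s) :=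
    fun s => hαopt s (fun m => β m s) (fun m => hβpos m s) (hβsum s)
  have hGint : Integrable (fun s => ∑ m, w m * U m s (α m s)) μ :=
    integrable_finset_sum _ (fun m _ => (hαint m).const_mul _)
  have hNint : Integrable (fun s => ∑ m, w m * max (-(U m s (β m s))) 0) μ :=
    integrable_finset_sum _ (fun m _ => (hN m).const_mul _)
  have hBd : Integrable (fun s =>
      |∑ m, w m * U m s (α m s)| + ∑ m, w m * max (-(U m s (β m s))) 0) μ := hGint.abs.add hNint
  -- integrability of improved utilities for positive-weight agents
  have hfint : ∀ m, w m ≠ 0 → Integrable (fun s => U m s (β m s)) μ := by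
    intro m hm
    have hwm : 0 < w m := lt_of_le_of_ne (hwnn m) (Ne.symm hm)
    have h1 : Integrable (fun s => w m * U m s (β m s)) μ := by
      refine Integrable.mono' hBd ((hfmeas m).const_mul _).aestronglyMeasurable
        (Filter.Eventually.of_forall fun s => ?_)
      rw [Real.norm_eq_abs, abs_le]
      have h3 : ∀ k, -(w k * max (-(U k s (β k s))) 0) ≤ w k * U k s (β k s) := by
        intro k
        rw [← mul_neg]
        exact mul_le_mul_of_nonneg_left (neg_le.2 (le_max_left _ _)) (hwnn k)
      constructor
      · have h2 : -(w m * U m s (β m s)) ≤ w m * max (-(U m s (β m s))) 0 := by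
          rw [← mul_neg]
          exact mul_le_mul_of_nonneg_left (le_max_left _ _) (hwnn m)
        have h3' : w m * max (-(U m s (β m s))) 0 ≤ ∑ k, w k * max (-(U k s (β k s))) 0 :=
          Finset.single_le_sum (f := fun k => w k * max (-(U k s (β k s))) 0)
            (fun k _ => mul_nonneg (hwnn k) (le_max_right _ _)) (mem_univ m)
        have h4 : (0:ℝ) ≤ |∑ k, w k * U k s (α k s)| := abs_nonneg _
        linarith
      · have h5 : w m * U m s (β m s) + ∑ k ∈ univ.erase m, w k * U k s (β k s)
            = ∑ k, w k * U k s (β k s) :=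
          Finset.add_sum_erase _ (fun k => w k * U k s (β k s)) (mem_univ m)
        have h4 : ∑ k ∈ univ.erase m, (-(w k * max (-(U k s (β k s))) 0))
            ≤ ∑ k ∈ univ.erase m, w k * U k s (β k s) :=
          Finset.sum_le_sum (fun k _ => h3 k)
        rw [Finset.sum_neg_distrib] at h4
        have h6 : ∑ k ∈ univ.erase m, w k * max (-(U k s (β k s))) 0
            ≤ ∑ k, w k * max (-(U k s (β k s))) 0 :=
          Finset.sum_le_sum_of_subset_of_nonneg (erase_subset m univ)
            (fun k _ _ => mul_nonneg (hwnn k) (le_max_right _ _))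
        have h7 : ∑ k, w k * U k s (α k s) ≤ |∑ k, w k * U k s (α k s)| := le_abs_self _
        have h8 := hkey s
        linarith
    have heq : (fun s => (w m)⁻¹ * (w m * U m s (β m s))) = fun s => U m s (β m s) := by
      funext s; field_simp
    rw [← heq]
    exact h1.const_mul _
  -- integral comparison for positive-weight agents
  have hle : ∀ m, w m ≠ 0 → ∫ s, U m s (α m s) ∂μ ≤ ∫ s, U m s (β m s) ∂μ := by
    intro m hm
    have h := hβge m
    rw [eE_coe_of_integrable μ (fun s => U m s (β m s)) (hfint m hm)] at h
    exact_mod_cast h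
  -- the deficit function
  set T : Finset (Fin M) := univ.filter (fun m => w m ≠ 0) with hT
  set D : S → ℝ := fun s => ∑ m ∈ T, w m * (U m s (α m s) - U m s (β m s)) with hDdef
  have hsumT : ∀ h : Fin M → ℝ, ∑ m ∈ T, w m * h m = ∑ m, w m * h m := by
    intro h
    exact Finset.sum_filter_of_ne (fun x _ hx h0 => hx (by rw [h0, zero_mul]))
  have hD : ∀ s, D s = ∑ m, w m * U m s (α m s) - ∑ m, w m * U m s (β m s) := by
    intro s
    rw [hDdef]
    dsimp only
    rw [← hsumT (fun m => U m s (α m s)), ← hsumT (fun m => U m s (β m s)),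
      ← Finset.sum_sub_distrib]
    exact Finset.sum_congr rfl (fun m _ => by ring)
  have hDnn : ∀ s, 0 ≤ D s := fun s => by rw [hD s]; linarith [hkey s]
  have hDint : Integrable D μ := by
    rw [hDdef]
    exact integrable_finset_sum _ (fun m hm => by
      exact ((hαint m).sub (hfint m (mem_filter.1 hm).2)).const_mul _)
  have hDig : ∫ s, D s ∂μ
      = ∑ m ∈ T, w m * ((∫ s, U m s (α m s) ∂μ) - ∫ s, U m s (β m s) ∂μ) := by
    have hsubint : ∀ m ∈ T, Integrable (fun s => w m * (U m s (α m s) - U m s (β m s))) μ :=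
      fun m hm => by exact ((hαint m).sub (hfint m (mem_filter.1 hm).2)).const_mul _
    rw [hDdef]
    rw [integral_finset_sum _ hsubint]
    refine Finset.sum_congr rfl (fun m hm => ?_)
    rw [integral_const_mul, integral_sub (hαint m) (hfint m (mem_filter.1 hm).2)]
  have hDpos : (0:ℝ) ≤ ∫ s, D s ∂μ := integral_nonneg hDnn
  rcases eq_or_ne (w l) 0 with wl | wl
  · -- case w l = 0
    -- β l is not a.e. zero
    have hane : ¬ (β l) =ᵐ[μ] 0 := by
      intro hae
      have hfg : (fun s => ((U l s (β l s) : ℝ) : EReal))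
          =ᵐ[μ] (fun s => ((U l s (α l s) : ℝ) : EReal)) := by
        refine hae.mono (fun s hs => ?_)
        have h0 : β l s = 0 := hs
        dsimp only
        rw [h0, hαzero l wl s]
      have heq : eE μ (fun s => ((U l s (β l s) : ℝ) : EReal))
          = ((∫ s, U l s (α l s) ∂μ : ℝ) : EReal) :=
        (eE_congr_ae μ hfg).trans (eE_coe_of_integrable μ _ (hαint l))
      rw [heq] at hβl
      exact lt_irrefl _ hβl
    have hApos : 0 < μ {s | 0 < β l s} := by
      rcases eq_or_ne (μ {s | 0 < β l s}) 0 with h0 | h0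
      · exfalso
        refine hane ?_
        have hsub : {s | β l s ≠ 0} ⊆ {s | 0 < β l s} :=
          fun s hs => lt_of_le_of_ne (hβpos l s) (Ne.symm hs)
        have h0' : μ {s | β l s ≠ 0} = 0 := measure_mono_null hsub h0
        rw [Filter.EventuallyEq, ae_iff]
        simpa using h0'
      · exact pos_iff_ne_zero.2 h0
    obtain ⟨m0, hm0⟩ : ∃ m, w m ≠ 0 := by
      by_contra hc
      push_neg at hc
      rw [Finset.sum_eq_zero (fun m _ => hc m)] at hwsum
      norm_num at hwsum
    -- strict pointwise inequality wherever β l > 0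
    have hstrict : ∀ s, 0 < β l s →
        ∑ m, w m * U m s (β m s) < ∑ m, w m * U m s (α m s) := by
      intro s hs
      set c : ℝ := ∑ k ∈ univ.filter (fun k => w k = 0), β k s with hc
      have hcpos : 0 < c :=
        lt_of_lt_of_le hs (Finset.single_le_sum (f := fun k => β k s)
          (fun k _ => hβpos k s) (mem_filter.2 ⟨mem_univ l, wl⟩))
      set q : Fin M → ℝ := fun m =>
        β m s - (if w m = 0 then β m s else 0) + (if m = m0 then c else 0) with hq
      have hqnn : ∀ m, 0 ≤ q m := by
        intro m
        rw [hq]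
        dsimp only
        have := hβpos m s
        split_ifs <;> linarith
      have hqsum : ∑ m, q m = Λ s := by
        have e1 : ∑ m, (if m = m0 then c else 0) = c := by
          rw [Finset.sum_ite_eq' univ m0 (fun _ => c)]
          simp
        have e2 : ∑ m, (if w m = 0 then β m s else 0) = c :=
          (Finset.sum_filter _ _).symm
        calc ∑ m, q m
            = ∑ m, β m s - ∑ m, (if w m = 0 then β m s else 0)
              + ∑ m, (if m = m0 then c else 0) := by
              rw [hq]
              rw [Finset.sum_add_distrib, Finset.sum_sub_distrib]
          _ = Λ s := by rw [e1, e2, hβsum s]; ring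
      have hopt := hαopt s q hqnn hqsum
      have hlt2 : ∑ m, w m * U m s (β m s) < ∑ m, w m * U m s (q m) := by
        refine Finset.sum_lt_sum (fun m _ => ?_) ⟨m0, mem_univ m0, ?_⟩
        · rcases eq_or_ne (w m) 0 with h0 | h0
          · rw [h0]; simp
          · have hqm : q m = β m s + (if m = m0 then c else 0) := by
              rw [hq]; dsimp only; rw [if_neg h0]; ring
            rcases eq_or_ne m m0 with hm | hm
            · rw [hqm, if_pos hm]
              exact mul_le_mul_of_nonneg_left
                (le_of_lt (hUlt m s _ _ (hβpos m s) (by linarith))) (hwnn m)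
            · rw [hqm, if_neg hm, add_zero]
        · have hq0 : q m0 = β m0 s + c := by
            rw [hq]; dsimp only; rw [if_neg hm0, if_pos rfl]; ring
          rw [hq0]
          have hwm0 : 0 < w m0 := lt_of_le_of_ne (hwnn m0) (Ne.symm hm0)
          exact mul_lt_mul_of_pos_left
            (hUlt m0 s _ _ (hβpos m0 s) (by linarith)) hwm0
      exact lt_of_lt_of_le hlt2 hopt
    have h2 : ∫ s, D s ∂μ ≤ 0 := by
      rw [hDig]
      refine Finset.sum_nonpos (fun m hm => ?_)
      have h := hle m (mem_filter.1 hm).2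
      have := hwnn m
      nlinarith
    have h3 : 0 < ∫ s, D s ∂μ := by
      refine (integral_pos_iff_support_of_nonneg hDnn hDint).2 ?_
      refine lt_of_lt_of_le hApos (measure_mono ?_)
      intro s hs
      have := hstrict s hs
      have hDs : 0 < D s := by rw [hD s]; linarith
      exact ne_of_gt hDs
    linarith
  · -- case w l ≠ 0
    have hlt : ∫ s, U l s (α l s) ∂μ < ∫ s, U l s (β l s) ∂μ := by
      have h := hβl
      rw [eE_coe_of_integrable μ (fun s => U l s (β l s)) (hfint l wl)] at h
      exact_mod_cast h
    have h2 : ∫ s, D s ∂μ < 0 := by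
      rw [hDig]
      have : ∑ m ∈ T, w m * ((∫ s, U m s (α m s) ∂μ) - ∫ s, U m s (β m s) ∂μ)
          < ∑ _m ∈ T, (0:ℝ) := by
        refine Finset.sum_lt_sum (fun m hm => ?_) ⟨l, mem_filter.2 ⟨mem_univ l, wl⟩, ?_⟩
        · have h := hle m (mem_filter.1 hm).2
          have := hwnn m
          nlinarith
        · have hwl : 0 < w l := lt_of_le_of_ne (hwnn l) (Ne.symm wl)
          exact mul_neg_of_pos_of_neg hwl (by linarith)
      simpa using this
    linarith
end

section
/- Let (S,𝒮,μ) be a σ-finite measure space, Λ : S → (0,∞) measurable, and (U_m)_{m=1}^M measurable fields of utilities satisfying the standing assumptions. If (α^m) is a Pareto optimal allocation of Λ (so in particular E[|U_m(α^m)|] < ∞ for all m), then there exists w ∈ Σ^M such that α^m = π^m(w,Λ) μ-a.e. for every m = 1,...,M. -/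
open Finset MeasureTheory

section AuxLemmas

-- auxiliary: concavity inequality with one endpoint at 0, via limit
lemma sa_aux {U U' : ℝ → ℝ} (h : StandingAssumptions U U')
    (h0 : ∀ c : ℝ, 0 < c → U 0 ≤ U c) {a b y : ℝ} (ha : 0 < a) (hb : 0 < b)
    (hab : a + b = 1) (hy : 0 < y) : a * U 0 + b * U y ≤ U (b * y) := by
  have hby : 0 < b * y := mul_pos hb hy
  have hcont : ContinuousAt U (b * y) := (h.2.2.1 _ hby).continuousAt
  have htend : Filter.Tendsto (fun ε : ℝ => U (a * ε + b * y))
      (nhdsWithin 0 (Set.Ioi (0:ℝ))) (nhds (U (b * y))) := by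
    have h1 : Filter.Tendsto (fun ε : ℝ => a * ε + b * y) (nhds 0) (nhds (b * y)) := by
      have : Continuous (fun ε : ℝ => a * ε + b * y) := by continuity
      simpa using this.tendsto 0
    exact hcont.tendsto.comp (h1.mono_left nhdsWithin_le_nhds)
  refine ge_of_tendsto htend ?_
  filter_upwards [self_mem_nhdsWithin] with ε (hε : ε ∈ Set.Ioi (0:ℝ))
  have hε' : (0:ℝ) < ε := hε
  have hconc := h.2.1.concaveOn.2 (Set.mem_Ioi.mpr hε') (Set.mem_Ioi.mpr hy)
    ha.le hb.le hab
  simp only [smul_eq_mul] at hconc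
  have : a * U 0 + b * U y ≤ a * U ε + b * U y := by
    have := h0 ε hε'
    nlinarith
  exact this.trans hconc

lemma sa_concaveIci {U U' : ℝ → ℝ} (h : StandingAssumptions U U')
    (h0 : ∀ c : ℝ, 0 < c → U 0 ≤ U c) : ConcaveOn ℝ (Set.Ici (0:ℝ)) U := by
  refine ⟨convex_Ici 0, ?_⟩
  intro x hx y hy a b ha hb hab
  simp only [smul_eq_mul]
  rcases eq_or_lt_of_le ha with ha0 | ha
  · simp [← ha0, show b = 1 by linarith]
  rcases eq_or_lt_of_le hb with hb0 | hb
  · simp [← hb0, show a = 1 by linarith]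
  rcases eq_or_lt_of_le (Set.mem_Ici.mp hx) with hx0 | hx
  · rcases eq_or_lt_of_le (Set.mem_Ici.mp hy) with hy0 | hy
    · rw [← hx0, ← hy0]
      have : a * U 0 + b * U 0 = U 0 := by linear_combination (U 0) * hab
      simp [this]
    · simpa [← hx0] using sa_aux h h0 ha hb hab hy
  · rcases eq_or_lt_of_le (Set.mem_Ici.mp hy) with hy0 | hy
    · have := sa_aux h h0 hb ha (by linarith) hx
      rw [← hy0]
      calc a * U x + b * U 0 = b * U 0 + a * U x := by ring
        _ ≤ U (a * x) := this
        _ = U (a * x + b * 0) := by ring_nf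
    · have := h.2.1.concaveOn.2 (Set.mem_Ioi.mpr hx) (Set.mem_Ioi.mpr hy) ha.le hb.le hab
      simpa using this

lemma ennreal_to_ereal_coe {x : ENNReal} (hx : x ≠ ⊤) :
    (x : EReal) = ((x.toReal : ℝ) : EReal) := by
  lift x to NNReal using hx
  rw [EReal.coe_nnreal_eq_coe_real]
  simp

variable {S : Type*} [MeasurableSpace S] {μ : Measure S}

lemma eE_eq_integral {f : S → ℝ} (hf : Integrable f μ) :
    eE μ (fun s => (f s : EReal)) = ((∫ s, f s ∂μ : ℝ) : EReal) := by
  have hN : (∫⁻ s, enegpart ((f s : EReal)) ∂μ) = ∫⁻ s, ENNReal.ofReal (-(f s)) ∂μ := by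
    simp [enegpart_coe]
  have hP : (∫⁻ s, epospart ((f s : EReal)) ∂μ) = ∫⁻ s, ENNReal.ofReal (f s) ∂μ := by
    simp [epospart_coe]
  have hnorm : (∫⁻ s, ENNReal.ofReal ‖f s‖ ∂μ) < ⊤ := (hasFiniteIntegral_iff_norm f).mp hf.2
  have hNlt : (∫⁻ s, ENNReal.ofReal (-(f s)) ∂μ) < ⊤ :=
    lt_of_le_of_lt (lintegral_mono fun s => ENNReal.ofReal_le_ofReal (by
      simp [neg_le_abs, abs_eq_max_neg, Real.norm_eq_abs, le_abs_self, neg_le_abs])) hnorm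
  have hPlt : (∫⁻ s, ENNReal.ofReal (f s) ∂μ) < ⊤ :=
    lt_of_le_of_lt (lintegral_mono fun s => ENNReal.ofReal_le_ofReal (le_abs_self _)) hnorm
  rw [eE, hN, hP, if_neg hNlt.ne]
  rw [integral_eq_lintegral_pos_part_sub_lintegral_neg_part hf]
  rw [ennreal_to_ereal_coe hPlt.ne, ennreal_to_ereal_coe hNlt.ne, ← EReal.coe_sub]

lemma integral_le_eE {g f : S → ℝ} (hg : Integrable g μ) (hf : Measurable f)
    (hle : ∀ s, g s ≤ f s) :
    ((∫ s, g s ∂μ : ℝ) : EReal) ≤ eE μ (fun s => (f s : EReal)) := by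
  have hgnorm : (∫⁻ s, ENNReal.ofReal ‖g s‖ ∂μ) < ⊤ := (hasFiniteIntegral_iff_norm g).mp hg.2
  have hNlt : (∫⁻ s, enegpart ((f s : EReal)) ∂μ) < ⊤ := by
    rw [show (fun s => enegpart ((f s : EReal))) = fun s => ENNReal.ofReal (-(f s)) by
      funext s; exact enegpart_coe _]
    refine lt_of_le_of_lt (lintegral_mono fun s => ENNReal.ofReal_le_ofReal ?_) hgnorm
    have := hle s
    rw [Real.norm_eq_abs]
    have : -(f s) ≤ -(g s) := by linarith
    exact this.trans (neg_le_abs _)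
  by_cases hPtop : (∫⁻ s, epospart ((f s : EReal)) ∂μ) = ⊤
  · rw [eE, if_neg hNlt.ne, hPtop]
    rw [ennreal_to_ereal_coe hNlt.ne]
    rw [EReal.coe_ennreal_top, EReal.top_sub_coe]
    exact le_top
  · -- f is integrable
    have hfint : Integrable f μ := by
      refine ⟨hf.aestronglyMeasurable, ?_⟩
      rw [hasFiniteIntegral_iff_norm]
      have hptwise : ∀ s, ENNReal.ofReal ‖f s‖ ≤
          ENNReal.ofReal (f s) + ENNReal.ofReal (-(f s)) := by
        intro s
        rcases le_total 0 (f s) with h | h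
        · rw [Real.norm_eq_abs, abs_of_nonneg h]; exact le_add_of_le_of_nonneg le_rfl zero_le
        · rw [Real.norm_eq_abs, abs_of_nonpos h]; exact le_add_of_nonneg_of_le zero_le le_rfl
      refine lt_of_le_of_lt (lintegral_mono hptwise) ?_
      rw [lintegral_add_left (by exact hf.ennreal_ofReal)]
      have h1 : (∫⁻ s, ENNReal.ofReal (f s) ∂μ) < ⊤ := by
        have : (fun s => epospart ((f s : EReal))) = fun s => ENNReal.ofReal (f s) := by
          funext s; exact epospart_coe _
        rw [← this]
        exact lt_top_iff_ne_top.mpr hPtop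
      have h2 : (∫⁻ s, ENNReal.ofReal (-(f s)) ∂μ) < ⊤ := by
        have : (fun s => enegpart ((f s : EReal))) = fun s => ENNReal.ofReal (-(f s)) := by
          funext s; exact enegpart_coe _
        rw [← this]; exact hNlt
      exact ENNReal.add_lt_top.mpr ⟨h1, h2⟩
    rw [eE_eq_integral hfint, EReal.coe_le_coe_iff]
    exact integral_mono hg hfint hle


end AuxLemmas

section Aux2

lemma rat_simplex_approx (M : ℕ) (hM : 0 < M) (x : Fin M → ℝ) (hx : ∀ m, 0 < x m)
    (hsum : ∑ m, x m = 1) {δ : ℝ} (hδ : 0 < δ) :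
    ∃ p : Fin M → ℝ, (∀ m, 0 < p m) ∧ (∑ m, p m = 1) ∧ (∀ m, ∃ q : ℚ, p m = (q : ℝ)) ∧
      (∀ m, |p m - x m| < δ) := by
  set δ' : ℝ := δ / (M + 1) with hδ'def
  have hδ' : 0 < δ' := by positivity
  have H : ∀ m, ∃ q : ℚ, max (x m - δ') (x m / 2) < (q : ℝ) ∧ (q : ℝ) < x m := by
    intro m
    have h1 : max (x m - δ') (x m / 2) < x m := by
      apply max_lt <;> [linarith [hδ']; linarith [hx m]]
    exact exists_rat_btwn h1
  choose r hr1 hr2 using H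
  set j : Fin M := ⟨0, hM⟩ with hj
  classical
  refine ⟨fun m => if m = j then 1 - ∑ m' ∈ univ.erase j, (r m' : ℝ) else (r m : ℝ),
      ?_, ?_, ?_, ?_⟩
  all_goals
    have key : ∀ m' ∈ univ.erase j, 0 < x m' - (r m' : ℝ) ∧ x m' - (r m' : ℝ) < δ' := by
      intro m' _
      have h2 := lt_of_le_of_lt (le_max_left (x m' - δ') (x m' / 2)) (hr1 m')
      exact ⟨by linarith [hr2 m'], by linarith⟩
    have hsum_split : x j + ∑ m' ∈ univ.erase j, x m' = 1 := by
      rw [Finset.add_sum_erase _ _ (mem_univ j)]; exact hsum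
    have hRle : ∑ m' ∈ univ.erase j, (x m' - (r m' : ℝ)) ≤ (M : ℝ) * δ' := by
      calc ∑ m' ∈ univ.erase j, (x m' - (r m' : ℝ))
          ≤ ∑ _m' ∈ univ.erase j, δ' := Finset.sum_le_sum (fun m' hm' => (key m' hm').2.le)
        _ = (univ.erase j).card * δ' := by rw [Finset.sum_const, nsmul_eq_mul]
        _ ≤ (M : ℝ) * δ' := by
            apply mul_le_mul_of_nonneg_right _ hδ'.le
            have : (univ.erase j).card ≤ Fintype.card (Fin M) := by
              apply Finset.card_le_card (Finset.subset_univ _)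
            simpa using (Nat.cast_le.mpr this)
    have hRge : 0 ≤ ∑ m' ∈ univ.erase j, (x m' - (r m' : ℝ)) :=
      Finset.sum_nonneg (fun m' hm' => (key m' hm').1.le)
    have hpj : (1 : ℝ) - ∑ m' ∈ univ.erase j, (r m' : ℝ) =
        x j + ∑ m' ∈ univ.erase j, (x m' - (r m' : ℝ)) := by
      rw [Finset.sum_sub_distrib]; linarith [hsum_split]
  · intro m
    by_cases hm : m = j
    · subst hm
      dsimp only
      rw [if_pos rfl, hpj]; linarith [hx j]
    · simp only [if_neg hm]
      have := hr1 m
      have h2 := le_max_right (x m - δ') (x m / 2)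
      linarith [lt_of_le_of_lt h2 (hr1 m), hx m]
  · rw [← Finset.add_sum_erase _ _ (mem_univ j), if_pos rfl]
    rw [Finset.sum_congr rfl (fun m hm => if_neg (Finset.ne_of_mem_erase hm))]
    ring
  · intro m
    by_cases hm : m = j
    · subst hm
      refine ⟨1 - ∑ m' ∈ univ.erase j, r m', ?_⟩
      dsimp only
      rw [if_pos rfl]
      push_cast
      ring
    · exact ⟨r m, by simp [if_neg hm]⟩
  · intro m
    by_cases hm : m = j
    · subst hm
      dsimp only
      rw [if_pos rfl, hpj, abs_lt]
      have hMd : (M : ℝ) * δ' < δ := by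
        rw [hδ'def, mul_div_assoc', div_lt_iff₀ (by positivity)]
        nlinarith [hδ]
      exact ⟨by linarith [hx j], by linarith [hx j]⟩
    · simp only [if_neg hm]
      rw [abs_lt]
      have h1 := (key m (Finset.mem_erase.mpr ⟨hm, mem_univ m⟩)).1
      have h2 := (key m (Finset.mem_erase.mpr ⟨hm, mem_univ m⟩)).2
      have : δ' ≤ δ := by
        rw [hδ'def, div_le_iff₀ (by positivity)]
        nlinarith [hδ]
      constructor <;> linarith

lemma pointwise_max {M : ℕ} (hM : 0 < M) (w : Fin M → ℝ) (hw : ∀ m, 0 ≤ w m)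
    (V V' : Fin M → ℝ → ℝ) (hV : ∀ m, StandingAssumptions (V m) (V' m))
    (hV0 : ∀ m, ∀ c : ℝ, 0 < c → V m 0 ≤ V m c)
    (L : ℝ) (hL : 0 < L) (F : ℝ)
    (hrat : ∀ p : Fin M → ℝ, (∀ m, 0 < p m) → (∑ m, p m = 1) →
      (∀ m, ∃ qq : ℚ, p m = (qq : ℝ)) → ∑ m, w m * V m (p m * L) ≤ F)
    (q : Fin M → ℝ) (hq : ∀ m, 0 ≤ q m) (hqsum : ∑ m, q m = L) :
    ∑ m, w m * V m (q m) ≤ F := by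
  by_contra hgt'
  push_neg at hgt'
  set Gq := ∑ m, w m * V m (q m) with hGqdef
  set Gc := ∑ m, w m * V m (L / M) with hGcdef
  have hgt : F < Gq := hgt'
  set A : ℝ := |Gq| + |Gc| with hAdef
  have hA : 0 ≤ A := by positivity
  set ε : ℝ := min (1/2) ((Gq - F) / (2 * (A + 1))) with hεdef
  have hεpos : 0 < ε := lt_min (by norm_num) (div_pos (by linarith) (by positivity))
  have hεlt1 : ε < 1 := lt_of_le_of_lt (min_le_left _ _) (by norm_num)
  have hε2 : ε ≤ (Gq - F) / (2 * (A + 1)) := min_le_right _ _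
  have h1 : Gq - Gc ≤ A := by
    rw [hAdef]
    have := le_abs_self Gq
    have := neg_abs_le Gc
    linarith
  have keyε : ε * (Gq - Gc) ≤ (Gq - F) / 2 := by
    calc ε * (Gq - Gc) ≤ ε * A := mul_le_mul_of_nonneg_left h1 hεpos.le
      _ ≤ ((Gq - F) / (2 * (A + 1))) * A := mul_le_mul_of_nonneg_right hε2 hA
      _ ≤ (Gq - F) / 2 := by
          rw [div_mul_eq_mul_div, div_le_div_iff₀ (by positivity) (by norm_num)]
          nlinarith [hA, hgt]
  have hφ : F < (1 - ε) * Gq + ε * Gc := by nlinarith [keyε, hgt]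
  have hMR : (0:ℝ) < (M:ℝ) := Nat.cast_pos.mpr hM
  set q' : Fin M → ℝ := fun m => (1 - ε) * q m + ε * (L / M) with hq'def
  have hq'pos : ∀ m, 0 < q' m := by
    intro m
    have : 0 < ε * (L / M) := by positivity
    have : 0 ≤ (1 - ε) * q m := mul_nonneg (by linarith) (hq m)
    simp only [hq'def]
    linarith
  have hq'sum : ∑ m, q' m = L := by
    simp only [hq'def]
    rw [Finset.sum_add_distrib, ← Finset.mul_sum, hqsum, Finset.sum_const]
    simp only [card_univ, Fintype.card_fin, nsmul_eq_mul]
    field_simp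
    ring
  have step1 : ∀ m, (1 - ε) * V m (q m) + ε * V m (L / M) ≤ V m (q' m) := by
    intro m
    have := (sa_concaveIci (hV m) (hV0 m)).2 (Set.mem_Ici.mpr (hq m))
      (Set.mem_Ici.mpr (by positivity : (0:ℝ) ≤ L / M)) (by linarith : (0:ℝ) ≤ 1 - ε)
      hεpos.le (by ring)
    simpa [smul_eq_mul] using this
  have hGq' : F < ∑ m, w m * V m (q' m) := by
    have heq : (1 - ε) * Gq + ε * Gc = ∑ m, w m * ((1 - ε) * V m (q m) + ε * V m (L / M)) := by
      rw [hGqdef, hGcdef, Finset.mul_sum, Finset.mul_sum, ← Finset.sum_add_distrib]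
      exact Finset.sum_congr rfl (fun m _ => by ring)
    refine lt_of_lt_of_le hφ ?_
    rw [heq]
    exact Finset.sum_le_sum fun m _ => mul_le_mul_of_nonneg_left (step1 m) (hw m)
  set x : Fin M → ℝ := fun m => q' m / L with hxdef
  have hxpos : ∀ m, 0 < x m := fun m => div_pos (hq'pos m) hL
  have hxsum : ∑ m, x m = 1 := by
    simp only [hxdef]
    rw [← Finset.sum_div, hq'sum, div_self hL.ne']
  have hxL : ∀ m, x m * L = q' m := fun m => div_mul_cancel₀ _ hL.ne'
  set Φ : (Fin M → ℝ) → ℝ := fun p => ∑ m, w m * V m (p m * L) with hΦdef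
  have hΦx : F < Φ x := by
    have : Φ x = ∑ m, w m * V m (q' m) := by
      simp only [hΦdef]
      exact Finset.sum_congr rfl (fun m _ => by rw [hxL m])
    rw [this]; exact hGq'
  have hcont : ContinuousAt Φ x := by
    apply tendsto_finset_sum
    intro m _
    have h1 : ContinuousAt (fun p : Fin M → ℝ => p m * L) x :=
      ((continuous_apply m).mul continuous_const).continuousAt
    have h2 : ContinuousAt (V m) (x m * L) := by
      rw [hxL m]
      exact ((hV m).2.2.1 _ (hq'pos m)).continuousAt
    exact (ContinuousAt.comp (f := fun p : Fin M → ℝ => p m * L) h2 h1).const_mul (w m)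
  have hnhds : {p : Fin M → ℝ | F < Φ p} ∈ nhds x :=
    hcont.preimage_mem_nhds (Ioi_mem_nhds hΦx)
  obtain ⟨δ, hδpos, hball⟩ := Metric.mem_nhds_iff.mp hnhds
  obtain ⟨p, hp1, hp2, hp3, hp4⟩ := rat_simplex_approx M hM x hxpos hxsum hδpos
  have hpball : p ∈ Metric.ball x δ := by
    rw [Metric.mem_ball, dist_pi_lt_iff hδpos]
    intro i
    rw [Real.dist_eq]
    exact hp4 i
  have := hball hpball
  exact absurd (hrat p hp1 hp2 hp3) (not_le.mpr this)


end Aux2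

/-- Every Pareto optimal allocation `(α^m)` of `Λ` (with integrable
utilities) is, for some simplex weight `w`, μ-a.e. equal to the pointwise maximizer
`(π^m(w,Λ))` of the weighted aggregate utility. -/
theorem pointwise_maximizer_of_pareto_optimal
    {S : Type*} [MeasurableSpace S] (μ : Measure S) [SigmaFinite μ]
    (M : ℕ) (hM : 0 < M) (Λ : S → ℝ) (hΛm : Measurable Λ) (hΛpos : ∀ s, 0 < Λ s)
    (U U' : Fin M → S → ℝ → ℝ)
    (hUmeas : ∀ m, Measurable (fun p : S × ℝ => U m p.1 p.2))
    (hU : ∀ m, ∀ s, StandingAssumptions (U m s) (U' m s))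
    (hU0 : ∀ m, ∀ s, ∀ c : ℝ, 0 < c → U m s 0 ≤ U m s c)
    (α : Fin M → S → ℝ) (hαm : ∀ m, Measurable (α m))
    (hαpos : ∀ m, ∀ s, 0 ≤ α m s) (hαsum : ∀ s, ∑ m, α m s = Λ s)
    (hαint : ∀ m, Integrable (fun s => U m s (α m s)) μ)
    (hpareto : ¬ ∃ β : Fin M → S → ℝ, (∀ m, Measurable (β m)) ∧
      (∀ m, ∀ s, 0 ≤ β m s) ∧ (∀ s, ∑ m, β m s = Λ s) ∧
      (∀ m, ((∫ s, U m s (α m s) ∂μ : ℝ) : EReal) ≤ eE μ (fun s => (U m s (β m s) : EReal))) ∧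
      (∃ l, ((∫ s, U l s (α l s) ∂μ : ℝ) : EReal) < eE μ (fun s => (U l s (β l s) : EReal)))) :
    ∃ w ∈ stdSimplex ℝ (Fin M),
      (∀ m, w m = 0 → ∀ᵐ s ∂μ, α m s = 0) ∧
      (∀ᵐ s ∂μ, ∀ q : Fin M → ℝ, (∀ m, 0 ≤ q m) → (∑ m, q m = Λ s) →
        ∑ m, w m * U m s (q m) ≤ ∑ m, w m * U m s (α m s)) := by
  classical
  set xstar : Fin M → ℝ := fun m => ∫ s, U m s (α m s) ∂μ with hxstar
  set C : Set (Fin M → ℝ) := { z | ∃ β : Fin M → S → ℝ, (∀ m, Measurable (β m)) ∧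
    (∀ m, ∀ s, 0 ≤ β m s) ∧ (∀ s, ∑ m, β m s = Λ s) ∧
    (∀ m, Integrable (fun s => U m s (β m s)) μ) ∧
    (∀ m, z m ≤ ∫ s, U m s (β m s) ∂μ) } with hC
  have hxC : xstar ∈ C := ⟨α, hαm, hαpos, hαsum, hαint, fun m => le_refl _⟩
  set O : Set (Fin M → ℝ) := Set.univ.pi (fun m => Set.Ioi (xstar m)) with hO
  have hmemO : ∀ y : Fin M → ℝ, y ∈ O ↔ ∀ m, xstar m < y m := by
    intro y
    simp [hO, Set.mem_pi]
  have hOopen : IsOpen O := isOpen_set_pi Set.finite_univ (fun m _ => isOpen_Ioi)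
  have hOconv : Convex ℝ O := convex_pi (fun m _ => convex_Ioi _)
  -- Step 1 : O and the convex hull of C are disjoint (via Pareto optimality)
  have hdisj : Disjoint O (convexHull ℝ C) := by
    rw [Set.disjoint_left]
    intro y hyO hyC
    rw [_root_.convexHull_eq] at hyC
    obtain ⟨ι, t, wt, z, hwt0, hwt1, hzC, hy⟩ := hyC
    have hzC' : ∀ i, ∃ β : Fin M → S → ℝ, i ∈ t → ((∀ m, Measurable (β m)) ∧
        (∀ m, ∀ s, 0 ≤ β m s) ∧ (∀ s, ∑ m, β m s = Λ s) ∧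
        (∀ m, Integrable (fun s => U m s (β m s)) μ) ∧
        (∀ m, z i m ≤ ∫ s, U m s (β m s) ∂μ)) := by
      intro i
      by_cases hi : i ∈ t
      · obtain ⟨β, hβ⟩ := hzC i hi
        exact ⟨β, fun _ => hβ⟩
      · exact ⟨fun _ _ => 0, fun h => absurd h hi⟩
    choose β hβ using hzC'
    set δ : Fin M → S → ℝ := fun m s => ∑ i ∈ t, wt i * β i m s with hδ
    have hym : ∀ m, y m = ∑ i ∈ t, wt i * z i m := by
      intro m
      rw [← hy, Finset.centerMass_eq_of_sum_1 _ _ hwt1]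
      simp [Finset.sum_apply]
    -- properties of δ
    have hδm : ∀ m, Measurable (δ m) :=
      fun m => Finset.measurable_sum _ (fun i hi => ((hβ i hi).1 m).const_mul (wt i))
    have hδ0 : ∀ m, ∀ s, 0 ≤ δ m s := fun m s =>
      Finset.sum_nonneg fun i hi => mul_nonneg (hwt0 i hi) ((hβ i hi).2.1 m s)
    have hδsum : ∀ s, ∑ m, δ m s = Λ s := by
      intro s
      rw [Finset.sum_comm]
      calc ∑ i ∈ t, ∑ m, wt i * β i m s = ∑ i ∈ t, wt i * Λ s := by
            refine Finset.sum_congr rfl (fun i hi => ?_)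
            rw [← Finset.mul_sum, (hβ i hi).2.2.1 s]
        _ = Λ s := by rw [← Finset.sum_mul, hwt1, one_mul]
    have hconc : ∀ m s, (∑ i ∈ t, wt i * U m s (β i m s)) ≤ U m s (δ m s) := by
      intro m s
      have := (sa_concaveIci (hU m s) (hU0 m s)).le_map_sum hwt0 hwt1
        (p := fun i => β i m s) (fun i hi => Set.mem_Ici.mpr ((hβ i hi).2.1 m s))
      simpa [smul_eq_mul] using this
    have hgint : ∀ m, Integrable (fun s => ∑ i ∈ t, wt i * U m s (β i m s)) μ :=
      fun m => integrable_finset_sum _ (fun i hi => ((hβ i hi).2.2.2.1 m).const_mul (wt i))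
    have hgle : ∀ m, y m ≤ ∫ s, ∑ i ∈ t, wt i * U m s (β i m s) ∂μ := by
      intro m
      rw [integral_finset_sum _ (fun i hi => ((hβ i hi).2.2.2.1 m).const_mul (wt i)), hym m]
      refine Finset.sum_le_sum fun i hi => ?_
      rw [integral_const_mul]
      exact mul_le_mul_of_nonneg_left ((hβ i hi).2.2.2.2 m) (hwt0 i hi)
    have hδUm : ∀ m, Measurable (fun s => U m s (δ m s)) :=
      fun m => (hUmeas m).comp (measurable_id.prodMk (hδm m))
    have hkey : ∀ m, ((xstar m : ℝ) : EReal) < eE μ (fun s => (U m s (δ m s) : EReal)) := by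
      intro m
      have h1 : ((y m : ℝ) : EReal) ≤ eE μ (fun s => (U m s (δ m s) : EReal)) := by
        refine le_trans ?_ (integral_le_eE (hgint m) (hδUm m) (fun s => hconc m s))
        exact_mod_cast hgle m
      have h2 : (xstar m : EReal) < (y m : EReal) := by
        exact_mod_cast (hmemO y).mp hyO m
      exact lt_of_lt_of_le h2 h1
    exact hpareto ⟨δ, hδm, hδ0, hδsum, fun m => (hkey m).le, ⟨⟨0, hM⟩, hkey _⟩⟩
  -- Step 2 : separation
  obtain ⟨f, u, hfO, hfC⟩ :=
    geometric_hahn_banach_open hOconv hOopen (convex_convexHull ℝ C) hdisj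
  set v : Fin M → ℝ := fun m => f (fun j => if m = j then 1 else 0) with hv
  have hfeq : ∀ y : Fin M → ℝ, f y = ∑ m, y m * v m := by
    intro y
    have := LinearMap.pi_apply_eq_sum_univ (f : (Fin M → ℝ) →ₗ[ℝ] ℝ) y
    simpa [smul_eq_mul] using this
  have ha₀ : (fun j => xstar j + 1) ∈ O := by
    rw [hmemO]; intro m; simp
  have hvnonpos : ∀ m, v m ≤ 0 := by
    intro m
    by_contra hvm
    push_neg at hvm
    set a₀ : Fin M → ℝ := fun j => xstar j + 1 with ha₀def
    set eM : Fin M → ℝ := fun j => if m = j then 1 else 0 with heM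
    set tt : ℝ := (u - f a₀) / v m with htt
    have hfa₀ : f a₀ < u := hfO _ ha₀
    have htt0 : 0 ≤ tt := le_of_lt (div_pos (by linarith) hvm)
    have hmem : a₀ + tt • eM ∈ O := by
      rw [hmemO]
      intro m'
      simp only [Pi.add_apply, Pi.smul_apply, smul_eq_mul, ha₀def, heM]
      by_cases hmm : m = m'
      · rw [if_pos hmm]
        nlinarith [htt0]
      · rw [if_neg hmm]
        simp
    have hlt := hfO _ hmem
    rw [f.map_add, f.map_smul, smul_eq_mul] at hlt
    have hveq : f eM = v m := by rw [hv]
    rw [hveq, htt, div_mul_cancel₀ _ (ne_of_gt hvm)] at hlt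
    linarith
  have hvne : ∃ m, v m < 0 := by
    by_contra hall
    push_neg at hall
    have hveq : ∀ m, v m = 0 := fun m => le_antisymm (hvnonpos m) (hall m)
    have h1 : f (fun j => xstar j + 1) < u := hfO _ ha₀
    have h2 : u ≤ f xstar := hfC xstar (subset_convexHull ℝ C hxC)
    rw [hfeq] at h1 h2
    simp only [hveq, mul_zero, Finset.sum_const_zero] at h1 h2
    linarith
  set c : ℝ := ∑ m, v m with hc
  have hcneg : c < 0 := by
    obtain ⟨m₀, hm₀⟩ := hvne
    calc c = ∑ m, v m := hc
      _ < ∑ _m, (0:ℝ) := Finset.sum_lt_sum (fun i _ => hvnonpos i) ⟨m₀, mem_univ m₀, hm₀⟩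
      _ = 0 := by simp
  have hfxstar_le : ∀ z ∈ C, f xstar ≤ f z := by
    intro z hz
    have huz : u ≤ f z := hfC z (subset_convexHull ℝ C hz)
    refine le_of_forall_pos_le_add ?_
    intro ε' hε'
    set ε : ℝ := ε' / (-c) with hεdef
    have hεpos : 0 < ε := div_pos hε' (by linarith)
    have hmem : (fun j => xstar j + ε) ∈ O := by
      rw [hmemO]; intro m; simp [hεpos]
    have hlt := hfO _ hmem
    have hcomp : f (fun j => xstar j + ε) = f xstar + ε * c := by
      rw [hfeq, hfeq (y := xstar), hc, Finset.mul_sum, ← Finset.sum_add_distrib]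
      exact Finset.sum_congr rfl (fun m _ => by ring)
    have hεc : ε * (-c) = ε' := by
      rw [hεdef, div_mul_cancel₀ _ (by linarith : (-c) ≠ 0)]
    nlinarith [hlt, huz]
  set w : Fin M → ℝ := fun m => v m / c with hwdef
  have hwmem : w ∈ stdSimplex ℝ (Fin M) := by
    constructor
    · exact fun m => div_nonneg_iff.mpr (Or.inr ⟨hvnonpos m, hcneg.le⟩)
    · rw [hwdef, ← Finset.sum_div, ← hc, div_self hcneg.ne]
  have hwpos : ∀ m, 0 ≤ w m := hwmem.1
  have hwkey : ∀ z ∈ C, ∑ m, w m * z m ≤ ∑ m, w m * xstar m := by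
    intro z hz
    have h1 : f xstar ≤ f z := hfxstar_le z hz
    have hexp : ∀ y : Fin M → ℝ, ∑ m, w m * y m = f y * c⁻¹ := by
      intro y
      rw [hfeq, Finset.sum_mul]
      exact Finset.sum_congr rfl (fun m _ => by rw [hwdef]; ring)
    rw [hexp, hexp]
    exact mul_le_mul_of_nonpos_right h1 (inv_nonpos.mpr hcneg.le)
  -- the set of "good" weights established; now the measure-theoretic argument
  set F : S → ℝ := fun s => ∑ m, w m * U m s (α m s) with hFdef
  have hFint : Integrable F μ :=
    integrable_finset_sum _ (fun m _ => (hαint m).const_mul (w m))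
  have hFm : Measurable F := Finset.measurable_sum _
    (fun m _ => ((hUmeas m).comp (measurable_id.prodMk (hαm m))).const_mul (w m))
  set T : Set (Fin M → ℝ) :=
    {p | (∀ m, 0 < p m) ∧ (∑ m, p m = 1) ∧ ∀ m, ∃ qq : ℚ, p m = (qq : ℝ)} with hTdef
  have hTcount : T.Countable := by
    have hsub : T ⊆ Set.range (fun p : Fin M → ℚ => fun m => ((p m : ℚ) : ℝ)) := by
      intro p hp
      choose qq hqq using hp.2.2
      exact ⟨qq, by funext m; exact (hqq m).symm⟩
    exact (Set.countable_range _).mono hsub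
  have hTne : T.Nonempty := by
    refine ⟨fun _ => (M : ℝ)⁻¹, fun m => by positivity, ?_, fun m => ⟨(M : ℚ)⁻¹, by push_cast; ring⟩⟩
    rw [Finset.sum_const, card_univ, Fintype.card_fin, nsmul_eq_mul]
    field_simp
  obtain ⟨e, hTe⟩ := hTcount.exists_eq_range hTne
  have heT : ∀ n, e n ∈ T := fun n => hTe ▸ Set.mem_range_self n
  set g : ℕ → Fin M → S → ℝ := fun n m s => U m s (e n m * Λ s) with hgdef
  have hgm : ∀ n m, Measurable (g n m) := fun n m =>
    (hUmeas m).comp (measurable_id.prodMk (hΛm.const_mul (e n m)))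
  set h : ℕ → S → ℝ := fun n s => ∑ m, w m * g n m s with hhdef
  have hhm : ∀ n, Measurable (h n) :=
    fun n => Finset.measurable_sum _ (fun m _ => (hgm n m).const_mul (w m))
  have hBnull : ∀ n, μ {s | F s < h n s} = 0 := by
    intro n
    by_contra hpos
    set B := {s | F s < h n s} with hB
    have hBmeas : MeasurableSet B := measurableSet_lt hFm (hhm n)
    set E : ℕ → Set S := fun k => B ∩ spanningSets μ k ∩
      {s | ∀ m, |g n m s| ≤ (k : ℝ)} ∩ {s | 1 / ((k : ℝ) + 1) ≤ h n s - F s} with hEdef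
    have hEmeas : ∀ k, MeasurableSet (E k) := by
      intro k
      refine ((hBmeas.inter (measurableSet_spanningSets μ k)).inter ?_).inter ?_
      · rw [show {s | ∀ m, |g n m s| ≤ (k : ℝ)} = ⋂ m, {s | |g n m s| ≤ (k : ℝ)} by
          ext s; simp]
        exact MeasurableSet.iInter fun m => measurableSet_le (hgm n m).abs measurable_const
      · exact measurableSet_le measurable_const ((hhm n).sub hFm)
    have hcover : B ⊆ ⋃ k, E k := by
      intro s hs
      have h1 : 0 < h n s - F s := sub_pos.mpr hs
      obtain ⟨k₁, hk₁⟩ := exists_nat_one_div_lt h1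
      obtain ⟨k₂, hk₂⟩ := exists_nat_ge (∑ m, |g n m s|)
      have hsmem : s ∈ ⋃ k, spanningSets μ k := by rw [iUnion_spanningSets]; trivial
      obtain ⟨k₃, hk₃⟩ := Set.mem_iUnion.mp hsmem
      set K := max (max k₁ k₂) k₃ with hK
      refine Set.mem_iUnion.mpr ⟨K, ⟨⟨hs, ?_⟩, ?_⟩, ?_⟩
      · exact monotone_spanningSets μ (le_max_right _ _) hk₃
      · intro m
        have h4 : |g n m s| ≤ ∑ m', |g n m' s| :=
          Finset.single_le_sum (f := fun m' => |g n m' s|) (fun m' _ => abs_nonneg _) (mem_univ m)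
        have h5 : (k₂ : ℝ) ≤ (K : ℝ) := by
          exact_mod_cast Nat.le_trans (le_max_right k₁ k₂) (le_max_left _ _)
        linarith
      · have h6 : (k₁ : ℝ) ≤ (K : ℝ) := by
          exact_mod_cast Nat.le_trans (le_max_left k₁ k₂) (le_max_left _ _)
        have h7 : 1 / ((K : ℝ) + 1) ≤ 1 / ((k₁ : ℝ) + 1) :=
          one_div_le_one_div_of_le (by positivity) (by linarith)
        show 1 / ((K : ℝ) + 1) ≤ h n s - F s
        linarith
    have hEpos : ∃ k, μ (E k) ≠ 0 := by
      by_contra hall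
      push_neg at hall
      exact hpos (measure_mono_null hcover (measure_iUnion_null hall))
    obtain ⟨k, hk⟩ := hEpos
    have hEsub : E k ⊆ spanningSets μ k := fun s hs => hs.1.1.2
    have hEfin : μ (E k) < ⊤ :=
      lt_of_le_of_lt (measure_mono hEsub) (measure_spanningSets_lt_top μ k)
    set β : Fin M → S → ℝ := fun m => (E k).piecewise (fun s => e n m * Λ s) (α m) with hβdef
    have hβm : ∀ m, Measurable (β m) := fun m =>
      Measurable.piecewise (hEmeas k) (hΛm.const_mul _) (hαm m)
    have hepos : ∀ m, 0 < e n m := fun m => (heT n).1 m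
    have hesum : ∑ m, e n m = 1 := (heT n).2.1
    have hβ0 : ∀ m, ∀ s, 0 ≤ β m s := by
      intro m s
      by_cases hs : s ∈ E k
      · simp only [hβdef, Set.piecewise, if_pos hs]
        exact le_of_lt (mul_pos (hepos m) (hΛpos s))
      · simp only [hβdef, Set.piecewise, if_neg hs]
        exact hαpos m s
    have hβsum : ∀ s, ∑ m, β m s = Λ s := by
      intro s
      by_cases hs : s ∈ E k
      · simp only [hβdef, Set.piecewise, if_pos hs]
        rw [← Finset.sum_mul, hesum, one_mul]
      · simp only [hβdef, Set.piecewise, if_neg hs]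
        exact hαsum s
    have hUβ : ∀ m, (fun s => U m s (β m s)) =
        (E k).piecewise (g n m) (fun s => U m s (α m s)) := by
      intro m
      funext s
      by_cases hs : s ∈ E k <;>
        simp only [hβdef, hgdef, Set.piecewise, if_pos, if_neg, hs, if_true, if_false]
    have hgOn : ∀ m, IntegrableOn (g n m) (E k) μ := by
      intro m
      apply Measure.integrableOn_of_bounded (M := (k : ℝ)) hEfin.ne
        (hgm n m).aestronglyMeasurable
      refine (ae_restrict_mem (hEmeas k)).mono (fun s hs => ?_)
      rw [Real.norm_eq_abs]
      exact hs.1.2 m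
    have hαOn : ∀ m, IntegrableOn (fun s => U m s (α m s)) (E k)ᶜ μ :=
      fun m => (hαint m).integrableOn
    have hβint : ∀ m, Integrable (fun s => U m s (β m s)) μ := by
      intro m
      rw [hUβ m]
      exact Integrable.piecewise (hEmeas k) (hgOn m) (hαOn m)
    have hzC : (fun m => ∫ s, U m s (β m s) ∂μ) ∈ C :=
      ⟨β, hβm, hβ0, hβsum, hβint, fun m => le_refl _⟩
    have hle := hwkey _ hzC
    have hint_m : ∀ m, ∫ s, U m s (β m s) ∂μ =
        (∫ s in E k, g n m s ∂μ) + ∫ s in (E k)ᶜ, U m s (α m s) ∂μ := by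
      intro m
      rw [hUβ m]
      exact integral_piecewise (hEmeas k) (hgOn m) (hαOn m)
    have hxstar_m : ∀ m, xstar m =
        (∫ s in E k, U m s (α m s) ∂μ) + ∫ s in (E k)ᶜ, U m s (α m s) ∂μ :=
      fun m => (integral_add_compl (hEmeas k) (hαint m)).symm
    have hdiffint : ∀ m, IntegrableOn (fun s => g n m s - U m s (α m s)) (E k) μ :=
      fun m => (hgOn m).sub ((hαint m).integrableOn)
    have hdiff : ∑ m, w m * (∫ s, U m s (β m s) ∂μ) - ∑ m, w m * xstar m
        = ∫ s in E k, (h n s - F s) ∂μ := by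
      rw [← Finset.sum_sub_distrib]
      have hterm : ∀ m ∈ univ, w m * (∫ s, U m s (β m s) ∂μ) - w m * xstar m =
          ∫ s in E k, w m * (g n m s - U m s (α m s)) ∂μ := by
        intro m _
        rw [integral_const_mul, integral_sub (hgOn m) ((hαint m).integrableOn),
          hint_m m, hxstar_m m]
        ring
      rw [Finset.sum_congr rfl hterm,
        ← integral_finset_sum _ (fun m _ => ((hdiffint m).const_mul (w m)))]
      refine integral_congr_ae (Filter.EventuallyEq.of_eq ?_)
      funext s
      rw [hhdef, hFdef]
      rw [← Finset.sum_sub_distrib]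
      exact Finset.sum_congr rfl (fun m _ => by ring)
    have hEconst : ∀ s ∈ E k, 1 / ((k : ℝ) + 1) ≤ h n s - F s := fun s hs => hs.2
    have hhFOn : IntegrableOn (fun s => h n s - F s) (E k) μ := by
      have : (fun s => h n s - F s) = fun s => ∑ m, w m * (g n m s - U m s (α m s)) := by
        funext s
        rw [hhdef, hFdef, ← Finset.sum_sub_distrib]
        exact Finset.sum_congr rfl (fun m _ => by ring)
      rw [this]
      exact integrable_finset_sum _ (fun m _ => (hdiffint m).const_mul (w m))
    have hposint : 0 < ∫ s in E k, (h n s - F s) ∂μ := by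
      have hge := setIntegral_ge_of_const_le (hEmeas k) hEfin.ne hEconst hhFOn
      have h8 : 0 < (1 / ((k : ℝ) + 1)) * (μ (E k)).toReal :=
        mul_pos (by positivity) (ENNReal.toReal_pos hk hEfin.ne)
      rw [smul_eq_mul, measureReal_def, mul_comm] at hge
      linarith
    linarith
  have haeB : ∀ᵐ s ∂μ, ∀ n, ¬ (F s < h n s) := by
    have := measure_iUnion_null (s := fun n => {s | F s < h n s}) hBnull
    have h9 : ∀ᵐ s ∂μ, s ∉ ⋃ n, {s | F s < h n s} :=
      measure_eq_zero_iff_ae_notMem.mp this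
    filter_upwards [h9] with s hs n hn
    exact hs (Set.mem_iUnion.mpr ⟨n, hn⟩)
  have main2 : ∀ᵐ s ∂μ, ∀ q : Fin M → ℝ, (∀ m, 0 ≤ q m) → (∑ m, q m = Λ s) →
      ∑ m, w m * U m s (q m) ≤ ∑ m, w m * U m s (α m s) := by
    filter_upwards [haeB] with s hs q hq hqsum
    refine pointwise_max hM w hwpos (fun m => U m s) (fun m => U' m s)
      (fun m => hU m s) (fun m => hU0 m s) (Λ s) (hΛpos s) (F s) ?_ q hq hqsum
    intro p hp1 hp2 hp3
    have hpT : p ∈ T := ⟨hp1, hp2, hp3⟩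
    rw [hTe] at hpT
    obtain ⟨n, hn⟩ := hpT
    have := not_lt.mp (hs n)
    rw [hhdef] at this
    simp only [hgdef] at this
    rw [← hn]
    exact this
  refine ⟨w, hwmem, ?_, main2⟩
  intro m hwm
  have hsum1 : (∑ m', w m') ≠ 0 := by rw [hwmem.2]; norm_num
  obtain ⟨l, _, hl⟩ := Finset.exists_ne_zero_of_sum_ne_zero hsum1
  have hwl : 0 < w l := lt_of_le_of_ne (hwpos l) (Ne.symm hl)
  have hml : m ≠ l := fun hh => hl (hh ▸ hwm)
  filter_upwards [main2] with s hs
  by_contra hαne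
  have hαmpos : 0 < α m s := lt_of_le_of_ne (hαpos m s) (Ne.symm hαne)
  set q : Fin M → ℝ := fun m' => α m' s +
    α m s * ((if m' = l then 1 else 0) - (if m' = m then 1 else 0)) with hqdef
  have hql : q l = α l s + α m s := by
    rw [hqdef]
    dsimp only
    rw [if_pos rfl, if_neg (Ne.symm hml)]
    ring
  have hqm : q m = 0 := by
    rw [hqdef]
    dsimp only
    rw [if_neg hml, if_pos rfl]
    ring
  have hqother : ∀ m', m' ≠ l → m' ≠ m → q m' = α m' s := by
    intro m' h1 h2
    rw [hqdef]
    dsimp only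
    rw [if_neg h1, if_neg h2]
    ring
  have hq0 : ∀ m', 0 ≤ q m' := by
    intro m'
    by_cases h1 : m' = l
    · rw [h1, hql]; linarith [hαpos l s]
    · by_cases h2 : m' = m
      · rw [h2, hqm]
      · rw [hqother m' h1 h2]; exact hαpos m' s
  have hqsum : ∑ m', q m' = Λ s := by
    rw [hqdef, Finset.sum_add_distrib, hαsum s, ← Finset.mul_sum, Finset.sum_sub_distrib]
    rw [Finset.sum_ite_eq' univ l (fun _ => (1:ℝ)), Finset.sum_ite_eq' univ m (fun _ => (1:ℝ))]
    simp
  have hmax := hs q hq0 hqsum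
  have hUl : U l s (α l s) < U l s (α l s + α m s) := by
    rcases eq_or_lt_of_le (hαpos l s) with h0 | hpos
    · rw [← h0, zero_add]
      calc U l s 0 ≤ U l s (α m s / 2) := hU0 l s _ (by linarith)
        _ < U l s (α m s) := (hU l s).1 (Set.mem_Ioi.mpr (by linarith))
            (Set.mem_Ioi.mpr hαmpos) (by linarith)
    · exact (hU l s).1 (Set.mem_Ioi.mpr hpos)
        (Set.mem_Ioi.mpr (by linarith)) (by linarith)
  have hcontr : ∑ m', w m' * U m' s (α m' s) < ∑ m', w m' * U m' s (q m') := by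
    apply Finset.sum_lt_sum
    · intro m' _
      by_cases h1 : m' = l
      · rw [h1, hql]
        exact mul_le_mul_of_nonneg_left hUl.le (hwpos l)
      · by_cases h2 : m' = m
        · rw [h2, hwm]
          simp
        · rw [hqother m' h1 h2]
    · refine ⟨l, mem_univ l, ?_⟩
      rw [hql]
      exact mul_lt_mul_of_pos_left hUl hwl
  linarith
end

section
/- Let h_1,...,h_M : int ℝ^M_+ → ℝ be functions such that: (i) each h_m is 0-homogeneous (h_m(yw) = h_m(w) for y > 0); and (ii) for every m ≠ m_0 (a fixed index), h_m(w^1,...,w^M) is strictly decreasing in w^l for each l ≠ m (gross-substitute property). Then the system h_m(w) = 0 for all m = 1,...,M has at most one solution w in the interior of the simplex Σ^M. -/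
open Finset

private lemma chain_mono (M : ℕ) (m₀ : Fin M) (h : Fin M → (Fin M → ℝ) → ℝ)
    (hgs : ∀ m, m ≠ m₀ → ∀ l, l ≠ m → ∀ w₁ w₂ : Fin M → ℝ,
      (∀ k, 0 < w₁ k) → (∀ k, 0 < w₂ k) →
      (∀ k, k ≠ l → w₁ k = w₂ k) → w₁ l < w₂ l → h m w₂ < h m w₁)
    (m : Fin M) (hm : m ≠ m₀) (a b : Fin M → ℝ)
    (ha : ∀ k, 0 < a k) (hb : ∀ k, 0 < b k)
    (hab : ∀ k, a k ≤ b k) (hmm : a m = b m) :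
    ∀ S : Finset (Fin M),
      h m (fun k => if k ∈ S then b k else a k) ≤ h m a ∧
      ((∃ k ∈ S, a k < b k) → h m (fun k => if k ∈ S then b k else a k) < h m a) := by
  intro S
  induction S using Finset.induction_on with
  | empty => simp
  | @insert j S' hj ih =>
    set c' : Fin M → ℝ := fun k => if k ∈ S' then b k else a k with hc'
    set c : Fin M → ℝ := fun k => if k ∈ insert j S' then b k else a k with hc
    have hc'pos : ∀ k, 0 < c' k := by
      intro k; simp only [hc']; split <;> [exact hb k; exact ha k]
    have hcpos : ∀ k, 0 < c k := by
      intro k; simp only [hc]; split <;> [exact hb k; exact ha k]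
    have step : h m c ≤ h m c' ∧ (a j < b j → h m c < h m c') := by
      by_cases hjb : a j < b j
      · have hjm : j ≠ m := by
          intro hjm; rw [hjm, hmm] at hjb; exact lt_irrefl _ hjb
        have hoff : ∀ k, k ≠ j → c' k = c k := by
          intro k hk; simp only [hc', hc, Finset.mem_insert, hk, false_or]
        have hlt : c' j < c j := by
          simp only [hc', hc, Finset.mem_insert, if_pos (Or.inl rfl), if_neg hj]
          exact hjb
        have := hgs m hm j hjm c' c hc'pos hcpos hoff hlt
        exact ⟨le_of_lt this, fun _ => this⟩
      · have heq : c = c' := by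
          funext k
          by_cases hk : k = j
          · subst hk
            have : a k = b k := le_antisymm (hab k) (not_lt.1 hjb)
            simp only [hc', hc, Finset.mem_insert, if_pos (Or.inl rfl), if_neg hj, this]
          · simp only [hc', hc, Finset.mem_insert, hk, false_or]
        rw [heq]
        exact ⟨le_refl _, fun hlt => absurd hlt hjb⟩
    constructor
    · exact le_trans step.1 ih.1
    · rintro ⟨k, hk, hkb⟩
      rcases Finset.mem_insert.1 hk with rfl | hk'
      · exact lt_of_lt_of_le (step.2 hkb) ih.1
      · exact lt_of_le_of_lt step.1 (ih.2 ⟨k, hk', hkb⟩)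

private lemma unique_aux (M : ℕ) (m₀ : Fin M) (h : Fin M → (Fin M → ℝ) → ℝ)
    (hhom : ∀ m, ∀ y : ℝ, 0 < y → ∀ w : Fin M → ℝ, (∀ l, 0 < w l) →
      h m (fun l => y * w l) = h m w)
    (hgs : ∀ m, m ≠ m₀ → ∀ l, l ≠ m → ∀ w₁ w₂ : Fin M → ℝ,
      (∀ k, 0 < w₁ k) → (∀ k, 0 < w₂ k) →
      (∀ k, k ≠ l → w₁ k = w₂ k) → w₁ l < w₂ l → h m w₂ < h m w₁)
    (w₁ w₂ : Fin M → ℝ)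
    (hw₁ : ∀ l, 0 < w₁ l) (hs₁ : ∑ l, w₁ l = 1)
    (hw₂ : ∀ l, 0 < w₂ l) (hs₂ : ∑ l, w₂ l = 1)
    (hz₁ : ∀ m, h m w₁ = 0) (hz₂ : ∀ m, h m w₂ = 0)
    (hle : w₁ m₀ ≤ w₂ m₀) : w₁ = w₂ := by
  have hne : (Finset.univ : Finset (Fin M)).Nonempty := ⟨m₀, Finset.mem_univ m₀⟩
  set y := Finset.univ.sup' hne (fun m => w₁ m / w₂ m) with hy
  obtain ⟨l₀, -, hl₀⟩ := Finset.exists_mem_eq_sup' hne (fun m => w₁ m / w₂ m)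
  have hyb : ∀ m, w₁ m ≤ y * w₂ m := by
    intro m
    have := Finset.le_sup' (fun m => w₁ m / w₂ m) (Finset.mem_univ m)
    exact (div_le_iff₀ (hw₂ m)).1 this
  have hyl₀ : w₁ l₀ = y * w₂ l₀ := by
    rw [hy, hl₀, div_mul_cancel₀ _ (ne_of_gt (hw₂ l₀))]
  have hy0 : 0 < y := by
    rw [hy, hl₀]
    exact div_pos (hw₁ l₀) (hw₂ l₀)
  by_cases hy1 : y ≤ 1
  · funext m
    have hle' : ∀ k, w₁ k ≤ w₂ k := fun k =>
      le_trans (hyb k) (by nlinarith [hw₂ k])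
    by_contra hne'
    have hlt : w₁ m < w₂ m := lt_of_le_of_ne (hle' m) hne'
    have : ∑ l, w₁ l < ∑ l, w₂ l :=
      Finset.sum_lt_sum (fun k _ => hle' k) ⟨m, Finset.mem_univ m, hlt⟩
    rw [hs₁, hs₂] at this
    exact lt_irrefl _ this
  · exfalso
    push_neg at hy1
    have hl₀m₀ : l₀ ≠ m₀ := by
      intro hl
      rw [hl] at hyl₀
      nlinarith [hw₂ m₀]
    set b : Fin M → ℝ := fun k => y * w₂ k with hb
    have hbpos : ∀ k, 0 < b k := fun k => mul_pos hy0 (hw₂ k)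
    have hex : ∃ k, w₁ k < b k := by
      by_contra hc
      push_neg at hc
      have : ∑ l, b l ≤ ∑ l, w₁ l := Finset.sum_le_sum (fun k _ => hc k)
      rw [hs₁] at this
      have hsb : ∑ l, b l = y := by
        simp only [hb, ← Finset.mul_sum, hs₂, mul_one]
      rw [hsb] at this
      exact absurd this (not_le.2 hy1)
    obtain ⟨k, hk⟩ := hex
    have hchain := (chain_mono M m₀ h hgs l₀ hl₀m₀ w₁ b hw₁ hbpos hyb hyl₀
      Finset.univ).2 ⟨k, Finset.mem_univ k, hk⟩
    have hub : (fun k => if k ∈ (Finset.univ : Finset (Fin M)) then b k else w₁ k) = b := by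
      funext k; simp
    rw [hub, hz₁ l₀] at hchain
    have : h l₀ b = 0 := by
      rw [hb]
      rw [hhom l₀ y hy0 w₂ hw₂]
      exact hz₂ l₀
    rw [this] at hchain
    exact lt_irrefl _ hchain

/-- If `h_1,...,h_M` are `0`-homogeneous on the strictly positive
orthant and every `h_m` with `m ≠ m₀` is strictly decreasing in each coordinate
`w^l`, `l ≠ m` (gross-substitute property), then the system `h_m(w) = 0`,
`m = 1,...,M`, has at most one solution in the interior of the simplex. -/
theorem excess_utility_unique_zero
    (M : ℕ) (m₀ : Fin M) (h : Fin M → (Fin M → ℝ) → ℝ)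
    (hhom : ∀ m, ∀ y : ℝ, 0 < y → ∀ w : Fin M → ℝ, (∀ l, 0 < w l) →
      h m (fun l => y * w l) = h m w)
    (hgs : ∀ m, m ≠ m₀ → ∀ l, l ≠ m → ∀ w₁ w₂ : Fin M → ℝ,
      (∀ k, 0 < w₁ k) → (∀ k, 0 < w₂ k) →
      (∀ k, k ≠ l → w₁ k = w₂ k) → w₁ l < w₂ l → h m w₂ < h m w₁) :
    ∀ w₁ w₂ : Fin M → ℝ,
      (∀ l, 0 < w₁ l) → (∑ l, w₁ l = 1) → (∀ l, 0 < w₂ l) → (∑ l, w₂ l = 1) →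
      (∀ m, h m w₁ = 0) → (∀ m, h m w₂ = 0) → w₁ = w₂ := by
  intro w₁ w₂ hw₁ hs₁ hw₂ hs₂ hz₁ hz₂
  rcases le_total (w₁ m₀) (w₂ m₀) with hle | hle
  · exact unique_aux M m₀ h hhom hgs w₁ w₂ hw₁ hs₁ hw₂ hs₂ hz₁ hz₂ hle
  · exact (unique_aux M m₀ h hhom hgs w₂ w₁ hw₂ hs₂ hw₁ hs₁ hz₂ hz₁ hle).symm
end

section
/- Let (S,𝒮,μ) be a σ-finite measure space, Λ : S → (0,∞) measurable, and (U_m) measurable utility fields satisfying the standing assumptions. Fix w in the interior of Σ^M, z > 0, set ζ = z·U_c(w,Λ) and α^m_1 = π^m(w,Λ). Then for every β ∈ L^0_+ with E[ζ(β − α^m_1)] = 0 and E[U_m(β)] well-defined, one has E[U_m(β)] ≤ E[U_m(α^m_1)], provided E[|U_m(α^m_1)|] < ∞ and E[U_c(w,Λ)Λ] < ∞. That is, (ζ, (α^m_1)) satisfies the agents' optimality condition of an Arrow–Debreu equilibrium. -/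
open Finset MeasureTheory

/-- Tangent line inequality for a concave function on `(0,∞)`. -/
lemma concave_tangent_le {f : ℝ → ℝ} {f' q y : ℝ} (hf : ConcaveOn ℝ (Set.Ioi 0) f)
    (hd : HasDerivAt f f' q) (hq : 0 < q) (hy : 0 < y) :
    f y ≤ f q + f' * (y - q) := by
  rcases lt_trichotomy y q with h | rfl | h
  · have h1 := hf.le_slope_of_hasDerivAt (Set.mem_Ioi.2 hy) (Set.mem_Ioi.2 hq) h hd
    rw [slope_def_field] at h1
    have hpy : 0 < q - y := sub_pos.mpr h
    have := (le_div_iff₀ hpy).mp h1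
    nlinarith
  · simp
  · have h1 := hf.slope_le_of_hasDerivAt (Set.mem_Ioi.2 hq) (Set.mem_Ioi.2 hy) h hd
    rw [slope_def_field] at h1
    have hpy : 0 < y - q := sub_pos.mpr h
    have := (div_le_iff₀ hpy).mp h1
    nlinarith

/-- Tangent line inequality including the boundary point `0`, under the
assumption that `f 0` is below `f c` for all `c > 0`. -/
lemma concave_tangent_le' {f : ℝ → ℝ} {f' q y : ℝ} (hf : ConcaveOn ℝ (Set.Ioi 0) f)
    (hd : HasDerivAt f f' q) (hq : 0 < q) (hy : 0 ≤ y)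
    (h0 : ∀ c : ℝ, 0 < c → f 0 ≤ f c) :
    f y ≤ f q + f' * (y - q) := by
  rcases hy.eq_or_lt with h | h
  · subst h
    have hlim : Filter.Tendsto (fun t : ℝ => f q + f' * (t - q))
        (nhdsWithin 0 (Set.Ioi 0)) (nhds (f q + f' * (0 - q))) := by
      apply Filter.Tendsto.mono_left _ nhdsWithin_le_nhds
      exact (continuous_const.add ((continuous_const.mul
        (continuous_id.sub continuous_const)))).tendsto 0
    refine ge_of_tendsto hlim ?_
    filter_upwards [self_mem_nhdsWithin] with t ht
    exact (h0 t ht).trans (concave_tangent_le hf hd hq ht)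
  · exact concave_tangent_le hf hd hq h

/-- With `ζ = z·U_c(w,Λ)` and `α^m_1 = π^m(w,Λ)` for `w` in the
interior of the simplex and `z > 0`, every budget-feasible consumption `β ∈ L⁰₊`
(i.e. `E[ζ(β − α^m_1)] = 0`) satisfies `E[U_m(β)] ≤ E[U_m(α^m_1)]`: the agents'
optimality condition of an Arrow–Debreu equilibrium holds. -/
theorem agents_optimality_condition
    {S : Type*} [MeasurableSpace S] (μ : Measure S) [SigmaFinite μ]
    (M : ℕ) (Λ : S → ℝ) (hΛm : Measurable Λ) (hΛpos : ∀ s, 0 < Λ s)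
    (U U' : Fin M → S → ℝ → ℝ)
    (hUmeas : ∀ n, Measurable (fun q : S × ℝ => U n q.1 q.2))
    (hU : ∀ n, ∀ s, StandingAssumptions (U n s) (U' n s))
    (hU0 : ∀ n, ∀ s, ∀ c : ℝ, 0 < c → U n s 0 ≤ U n s c)
    (w : Fin M → ℝ) (hw : ∀ n, 0 < w n) (hw1 : ∑ n, w n = 1)
    (z : ℝ) (hz : 0 < z)
    (p : Fin M → S → ℝ) (hpm : ∀ n, Measurable (p n))
    (hppos : ∀ n, ∀ s, 0 < p n s) (hpsum : ∀ s, ∑ n, p n s = Λ s)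
    (hpopt : ∀ s, ∀ q : Fin M → ℝ, (∀ n, 0 ≤ q n) → (∑ n, q n = Λ s) →
      ∑ n, w n * U n s (q n) ≤ ∑ n, w n * U n s (p n s))
    (Uc : S → ℝ) (hUcdef : ∀ s, ∀ n, Uc s = w n * U' n s (p n s))
    (m : Fin M)
    (hint1 : Integrable (fun s => |U m s (p m s)|) μ)
    (hint2 : Integrable (fun s => Uc s * Λ s) μ)
    (β : S → ℝ) (hβm : Measurable β) (hβpos : ∀ s, 0 ≤ β s)
    (hbudget_int : Integrable (fun s => (z * Uc s) * (β s - p m s)) μ)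
    (hbudget : (∫ s, (z * Uc s) * (β s - p m s) ∂μ) = 0) :
    eE μ (fun s => (U m s (β s) : EReal)) ≤ ((∫ s, U m s (p m s) ∂μ : ℝ) : EReal) := by
  set f : S → ℝ := fun s => U m s (β s) with hf_def
  set h : S → ℝ := fun s => U m s (p m s) with hh_def
  set g : S → ℝ := fun s => h s + (1 / (z * w m)) * ((z * Uc s) * (β s - p m s)) with hg_def
  have hwm := hw m
  -- pointwise key inequality
  have hkey : ∀ s, f s ≤ g s := by
    intro s
    obtain ⟨_, hconc, hderiv, _⟩ := hU m s
    have hd := hderiv (p m s) (hppos m s)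
    have htan := concave_tangent_le' hconc.concaveOn hd (hppos m s) (hβpos s)
      (fun c hc => hU0 m s c hc)
    have hUc : Uc s = w m * U' m s (p m s) := hUcdef s m
    have hrw : (1 / (z * w m)) * ((z * Uc s) * (β s - p m s))
        = U' m s (p m s) * (β s - p m s) := by
      rw [hUc]; field_simp
    have hfin : f s ≤ h s + (1 / (z * w m)) * ((z * Uc s) * (β s - p m s)) := by
      rw [hrw]; exact htan
    exact hfin
  -- measurability
  have hmeasf : Measurable f := (hUmeas m).comp (measurable_id.prodMk hβm)
  have hmeash : Measurable h := (hUmeas m).comp (measurable_id.prodMk (hpm m))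
  have hinth : Integrable h μ :=
    hint1.mono' hmeash.aestronglyMeasurable (Filter.Eventually.of_forall fun s => by
      simp [hh_def, Real.norm_eq_abs])
  have hintg : Integrable g μ := hinth.add (hbudget_int.const_mul _)
  have hIg : ∫ s, g s ∂μ = ∫ s, h s ∂μ := by
    rw [hg_def]
    rw [integral_add hinth (hbudget_int.const_mul _), integral_const_mul, hbudget]
    simp
  -- unfold eE
  have hneg : ∀ s, enegpart ((f s : ℝ) : EReal) = ENNReal.ofReal (-(f s)) := by
    intro s; simp [enegpart]
  have hpos : ∀ s, epospart ((f s : ℝ) : EReal) = ENNReal.ofReal (f s) := by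
    intro s; simp [epospart]
  rw [eE]
  simp only [show ∀ s, enegpart ((U m s (β s) : ℝ) : EReal) = ENNReal.ofReal (-(f s)) from hneg,
    show ∀ s, epospart ((U m s (β s) : ℝ) : EReal) = ENNReal.ofReal (f s) from hpos]
  split_ifs with hA
  · exact bot_le
  · -- positive part is finite
    have hposle : ∀ s, ENNReal.ofReal (f s) ≤ (‖g s‖₊ : ENNReal) := by
      intro s
      rw [← enorm_eq_nnnorm, Real.enorm_eq_ofReal_abs]
      exact ENNReal.ofReal_le_ofReal ((hkey s).trans (le_abs_self _))
    have hPfin : (∫⁻ s, ENNReal.ofReal (f s) ∂μ) ≠ ⊤ := by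
      refine ne_top_of_le_ne_top hintg.hasFiniteIntegral.ne (lintegral_mono hposle)
    -- f is integrable
    have hfint : Integrable f μ := by
      refine ⟨hmeasf.aestronglyMeasurable, ?_⟩
      rw [HasFiniteIntegral]
      have hb : ∀ s, (‖f s‖₊ : ENNReal) ≤ ENNReal.ofReal (f s) + ENNReal.ofReal (-(f s)) := by
        intro s
        rw [← enorm_eq_nnnorm, Real.enorm_eq_ofReal_abs]
        rcases abs_cases (f s) with ⟨he, _⟩ | ⟨he, _⟩
        · rw [he]; exact le_add_right le_rfl
        · rw [he]; exact le_add_left le_rfl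
      calc (∫⁻ s, (‖f s‖₊ : ENNReal) ∂μ)
          ≤ ∫⁻ s, (ENNReal.ofReal (f s) + ENNReal.ofReal (-(f s))) ∂μ := lintegral_mono hb
        _ = (∫⁻ s, ENNReal.ofReal (f s) ∂μ) + (∫⁻ s, ENNReal.ofReal (-(f s)) ∂μ) :=
            lintegral_add_left hmeasf.ennreal_ofReal _
        _ < ⊤ := by
            rw [ENNReal.add_lt_top]
            exact ⟨lt_top_iff_ne_top.2 hPfin, lt_top_iff_ne_top.2 hA⟩
    -- identify eE with the Bochner integral
    set P := ∫⁻ s, ENNReal.ofReal (f s) ∂μ with hP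
    set N := ∫⁻ s, ENNReal.ofReal (-(f s)) ∂μ with hN
    have hIf : ∫ s, f s ∂μ = P.toReal - N.toReal :=
      integral_eq_lintegral_pos_part_sub_lintegral_neg_part hfint
    have hPcoe : ((P : EReal)) = ((P.toReal : ℝ) : EReal) := by
      rw [← EReal.coe_toReal (x := (P : EReal)) (by simp [EReal.coe_ennreal_eq_top_iff, hPfin])
        (by simp), EReal.toReal_coe_ennreal]
    have hNcoe : ((N : EReal)) = ((N.toReal : ℝ) : EReal) := by
      rw [← EReal.coe_toReal (x := (N : EReal)) (by simp [EReal.coe_ennreal_eq_top_iff, hA])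
        (by simp), EReal.toReal_coe_ennreal]
    rw [hPcoe, hNcoe, ← EReal.coe_sub, EReal.coe_le_coe_iff, ← hIf, ← hIg]
    exact integral_mono hfint hintg hkey
end

section
/- Let U : (0,∞) → ℝ be strictly concave, strictly increasing, continuously differentiable with the Inada conditions, and extend U to 0 by continuity (possibly −∞). Suppose α > 0 and η > 0 are measurable on a σ-finite measure space with E[η] < ∞ and E[|U(α)|] < ∞. Define β pointwise by U(α) − U(α−β) = min(η, U(2α) − U(α)). Then β is well-defined and measurable with 0 < β < α, E[U(α−β)] > −∞, and U'(α)β ≤ U(α) − U(α−β) pointwise, hence E[U'(α)β] < ∞. -/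
open MeasureTheory

open Set Filter

lemma deriv_le_slope_aux (U U' : ℝ → ℝ)
    (hconc : StrictConcaveOn ℝ (Set.Ioi (0 : ℝ)) U)
    (hderiv : ∀ c : ℝ, 0 < c → HasDerivAt U (U' c) c)
    {x y : ℝ} (hx : 0 < x) (hxy : x < y) :
    U' y ≤ (U y - U x) / (y - x) := by
  have hy : 0 < y := hx.trans hxy
  have ht : Tendsto (slope U y) (nhdsWithin y (Set.Ioi y)) (nhds (U' y)) :=
    (hasDerivAt_iff_tendsto_slope.mp (hderiv y hy)).mono_left
      (nhdsWithin_mono _ (fun t htt => ne_of_gt htt))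
  refine le_of_tendsto ht ?_
  filter_upwards [self_mem_nhdsWithin] with t (htt : y < t)
  have h := hconc.slope_anti_adjacent (Set.mem_Ioi.mpr hx) (Set.mem_Ioi.mpr (hy.trans htt))
    hxy htt
  rw [slope_def_field]
  exact h.le

lemma deriv_nonneg_aux (U U' : ℝ → ℝ)
    (hmono : StrictMonoOn U (Set.Ioi (0 : ℝ)))
    (hderiv : ∀ c : ℝ, 0 < c → HasDerivAt U (U' c) c)
    {y : ℝ} (hy : 0 < y) : 0 ≤ U' y := by
  have ht : Tendsto (slope U y) (nhdsWithin y (Set.Iio y)) (nhds (U' y)) :=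
    (hasDerivAt_iff_tendsto_slope.mp (hderiv y hy)).mono_left
      (nhdsWithin_mono _ (fun t htt => ne_of_lt htt))
  refine ge_of_tendsto ht ?_
  have hev : ∀ᶠ t in nhdsWithin y (Set.Iio y), 0 < t :=
    (eventually_gt_nhds hy).filter_mono nhdsWithin_le_nhds
  filter_upwards [self_mem_nhdsWithin, hev] with t (htt : t < y) htpos
  rw [slope_def_field]
  have hUt : U t < U y := hmono (Set.mem_Ioi.mpr htpos) (Set.mem_Ioi.mpr (htpos.trans htt)) htt
  exact div_nonneg_iff.mpr (Or.inr ⟨by linarith, by linarith⟩)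

/-- Existence of the solution of `U a - U (a - b) = m`. -/
lemma exists_sol_aux (U : ℝ → ℝ)
    (hmono : StrictMonoOn U (Set.Ioi (0 : ℝ)))
    (hconc : StrictConcaveOn ℝ (Set.Ioi (0 : ℝ)) U)
    (hcont : ContinuousOn U (Set.Ioi (0 : ℝ)))
    {a m : ℝ} (ha : 0 < a) (hm : 0 < m) (hma : m ≤ U (2 * a) - U a) :
    ∃ b, (0 < b ∧ b < a) ∧ U a - U (a - b) = m := by
  have hhalf : (0 : ℝ) < a / 2 := by positivity
  obtain ⟨D, hDdef⟩ : ∃ D : ℝ, D = U a - U (a / 2) := ⟨_, rfl⟩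
  have hD2 : U (2 * a) - U a < 2 * D := by
    have h := hconc.slope_anti_adjacent (Set.mem_Ioi.mpr hhalf)
      (Set.mem_Ioi.mpr (by linarith : (0:ℝ) < 2 * a)) (by linarith : a / 2 < a)
      (by linarith : a < 2 * a)
    rw [div_lt_div_iff₀ (by linarith) (by linarith)] at h
    have h' : (U (2 * a) - U a) * (a / 2) < (2 * D) * (a / 2) := by
      rw [hDdef]; nlinarith [h]
    exact lt_of_mul_lt_mul_right h' hhalf.le
  have hD : m / 2 < D := by linarith
  have hDpos : 0 < D := by linarith
  obtain ⟨x0, hx0def⟩ : ∃ x0 : ℝ, x0 = a / 2 * (1 - m / (2 * D)) := ⟨_, rfl⟩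
  have hfrac0 : 0 < m / (2 * D) := by positivity
  have hfrac1 : m / (2 * D) < 1 := (div_lt_one (by linarith)).mpr (by linarith)
  have hx0pos : 0 < x0 := by rw [hx0def]; exact mul_pos hhalf (by linarith)
  have hx0lt : x0 < a / 2 := by rw [hx0def]; nlinarith
  have key : m < U a - U x0 := by
    have h := hconc.slope_anti_adjacent (Set.mem_Ioi.mpr hx0pos) (Set.mem_Ioi.mpr ha)
      hx0lt (by linarith : a / 2 < a)
    rw [div_lt_div_iff₀ (by linarith) (by linarith : (0:ℝ) < a / 2 - x0)] at h
    have hax0 : a / 2 - x0 = a / 2 * (m / (2 * D)) := by rw [hx0def]; ring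
    have hDm : D * (a / 2 - x0) = (m / 2) * (a / 2) := by
      rw [hax0]; field_simp
    have h2 : (m / 2) * (a / 2) < (U (a / 2) - U x0) * (a / 2) := by
      calc (m / 2) * (a / 2) = D * (a / 2 - x0) := hDm.symm
        _ = (U a - U (a / 2)) * (a / 2 - x0) := by rw [hDdef]
        _ < (U (a / 2) - U x0) * (a - a / 2) := h
        _ = (U (a / 2) - U x0) * (a / 2) := by ring_nf
    have h3 : m / 2 < U (a / 2) - U x0 := lt_of_mul_lt_mul_right h2 hhalf.le
    have h4 : U a - U x0 = D + (U (a / 2) - U x0) := by rw [hDdef]; ring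
    linarith
  have hcont2 : ContinuousOn (fun b => U a - U (a - b)) (Set.Icc 0 (a - x0)) := by
    apply continuousOn_const.sub
    apply hcont.comp (continuousOn_const.sub continuousOn_id)
    intro b hb
    simp only [Set.mem_Icc] at hb
    refine Set.mem_Ioi.mpr ?_
    show (0 : ℝ) < a - b
    linarith
  have hivt := intermediate_value_Icc (by linarith : (0:ℝ) ≤ a - x0) hcont2
  have hmem : m ∈ Set.Icc ((fun b => U a - U (a - b)) 0) ((fun b => U a - U (a - b)) (a - x0)) := by
    constructor
    · simp only [sub_zero, sub_self]
      linarith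
    · simp only [sub_sub_cancel]
      linarith
  obtain ⟨b, hb, hfb⟩ := hivt hmem
  simp only [Set.mem_Icc] at hb
  refine ⟨b, ⟨?_, ?_⟩, hfb⟩
  · rcases lt_or_eq_of_le hb.1 with h | h
    · exact h
    · exfalso
      rw [← h] at hfb
      simp only [sub_zero, sub_self] at hfb
      linarith
  · linarith [hb.2, hx0pos]

/-- Construction of the test direction `β`: given measurable `α > 0`
and `η > 0` with `E[η] < ∞` and `E[|U(α)|] < ∞`, the equation
`U(α) − U(α−β) = min(η, U(2α) − U(α))` has a unique pointwise solution
`β ∈ (0, α)`, which is measurable, satisfies `E[U(α−β)] > −∞` (the negative part of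
`U(α−β)` is integrable), the pointwise bound `U'(α)β ≤ U(α) − U(α−β)`, and hence
`E[U'(α)β] < ∞`. -/
theorem test_direction_construction
    {S : Type*} [MeasurableSpace S] (μ : Measure S) [SigmaFinite μ]
    (U U' : ℝ → ℝ) (hU : StandingAssumptions U U')
    (α η : S → ℝ) (hαm : Measurable α) (hηm : Measurable η)
    (hαpos : ∀ s, 0 < α s) (hηpos : ∀ s, 0 < η s)
    (hηint : Integrable η μ)
    (hUαint : Integrable (fun s => |U (α s)|) μ) :
    ∃ β : S → ℝ, Measurable β ∧
      (∀ s, 0 < β s ∧ β s < α s) ∧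
      (∀ s, U (α s) - U (α s - β s) = min (η s) (U (2 * α s) - U (α s))) ∧
      (∀ s, ∀ b : ℝ, 0 < b → b < α s →
        U (α s) - U (α s - b) = min (η s) (U (2 * α s) - U (α s)) → b = β s) ∧
      Integrable (fun s => min (U (α s - β s)) 0) μ ∧
      (∀ s, U' (α s) * β s ≤ U (α s) - U (α s - β s)) ∧
      Integrable (fun s => U' (α s) * β s) μ := by
  obtain ⟨hmono, hconc, hderiv, hU'cont, htop, hinada⟩ := hU
  have hcont : ContinuousOn U (Set.Ioi (0:ℝ)) := fun c hc =>
    (hderiv c hc).continuousAt.continuousWithinAt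
  have hUle : ∀ x y : ℝ, 0 < x → x ≤ y → U x ≤ U y := by
    intro x y hx hxy
    rcases eq_or_lt_of_le hxy with h | h
    · rw [h]
    · exact (hmono (Set.mem_Ioi.mpr hx) (Set.mem_Ioi.mpr (hx.trans h)) h).le
  have hmpos : ∀ s, 0 < min (η s) (U (2 * α s) - U (α s)) := by
    intro s
    refine lt_min (hηpos s) (sub_pos.mpr ?_)
    exact hmono (Set.mem_Ioi.mpr (hαpos s)) (Set.mem_Ioi.mpr (by linarith [hαpos s]))
      (by linarith [hαpos s])
  have hex : ∀ s, ∃ b, (0 < b ∧ b < α s) ∧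
      U (α s) - U (α s - b) = min (η s) (U (2 * α s) - U (α s)) := fun s =>
    exists_sol_aux U hmono hconc hcont (hαpos s) (hmpos s) (min_le_right _ _)
  choose β hβrange hβeq using hex
  have hαβpos : ∀ s, 0 < α s - β s := fun s => by linarith [(hβrange s).2]
  have huniq : ∀ s, ∀ b : ℝ, 0 < b → b < α s →
      U (α s) - U (α s - b) = min (η s) (U (2 * α s) - U (α s)) → b = β s := by
    intro s b hb1 hb2 hbe
    have h1 : U (α s - b) = U (α s - β s) := by
      have h2 := hβeq s
      linarith
    have h3 : α s - b = α s - β s :=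
      hmono.injOn (Set.mem_Ioi.mpr (by linarith)) (Set.mem_Ioi.mpr (hαβpos s)) h1
    linarith
  -- measurable versions of U and U'
  have hUexpC : Continuous (U ∘ Real.exp) := by
    rw [← continuousOn_univ]
    exact hcont.comp Real.continuous_exp.continuousOn (fun x _ => Real.exp_pos x)
  have hU'expC : Continuous (U' ∘ Real.exp) := by
    rw [← continuousOn_univ]
    exact hU'cont.comp Real.continuous_exp.continuousOn (fun x _ => Real.exp_pos x)
  obtain ⟨G, hGdef⟩ : ∃ G : ℝ → ℝ, G = fun x => U (Real.exp (Real.log x)) := ⟨_, rfl⟩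
  obtain ⟨G', hG'def⟩ : ∃ G' : ℝ → ℝ, G' = fun x => U' (Real.exp (Real.log x)) := ⟨_, rfl⟩
  have hG : Measurable G := by rw [hGdef]; exact hUexpC.measurable.comp Real.measurable_log
  have hG' : Measurable G' := by rw [hG'def]; exact hU'expC.measurable.comp Real.measurable_log
  have hGeq : ∀ x : ℝ, 0 < x → G x = U x := by
    intro x hx
    rw [hGdef]; simp only [Real.exp_log hx]
  have hG'eq : ∀ x : ℝ, 0 < x → G' x = U' x := by
    intro x hx
    rw [hG'def]; simp only [Real.exp_log hx]
  -- measurability of β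
  have hβmeas : Measurable β := by
    apply measurable_of_Ioi
    intro q
    have hset : β ⁻¹' (Set.Ioi q) =
        {s | q < α s} ∩
          {s | G (α s) - G (α s - q) - min (η s) (G (2 * α s) - G (α s)) < 0} := by
      ext s
      have h2α : (0:ℝ) < 2 * α s := by linarith [hαpos s]
      simp only [Set.mem_preimage, Set.mem_Ioi, Set.mem_inter_iff, Set.mem_setOf_eq]
      constructor
      · intro hq
        have hqα : q < α s := hq.trans (hβrange s).2
        refine ⟨hqα, ?_⟩
        rw [hGeq _ (hαpos s), hGeq _ (by linarith), hGeq _ h2α]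
        rcases le_or_gt q 0 with h0 | h0
        · have h1 : U (α s) ≤ U (α s - q) := hUle _ _ (hαpos s) (by linarith)
          linarith [hmpos s]
        · have h1 : U (α s - β s) < U (α s - q) :=
            hmono (Set.mem_Ioi.mpr (hαβpos s)) (Set.mem_Ioi.mpr (by linarith)) (by linarith)
          linarith [hβeq s]
      · rintro ⟨hqα, hlt⟩
        rw [hGeq _ (hαpos s), hGeq _ (by linarith), hGeq _ h2α] at hlt
        rcases le_or_gt q 0 with h0 | h0
        · exact lt_of_le_of_lt h0 (hβrange s).1
        · by_contra hc
          push_neg at hc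
          have h1 : U (α s - q) ≤ U (α s - β s) :=
            hUle _ _ (by linarith) (by linarith)
          linarith [hβeq s]
    rw [hset]
    refine (measurableSet_lt measurable_const hαm).inter ?_
    have hmeas2 : Measurable (fun s =>
        G (α s) - G (α s - q) - min (η s) (G (2 * α s) - G (α s))) :=
      ((hG.comp hαm).sub (hG.comp (hαm.sub measurable_const))).sub
        (hηm.min ((hG.comp (hαm.const_mul 2)).sub (hG.comp hαm)))
    exact measurableSet_lt hmeas2 measurable_const
  -- pointwise derivative bound
  have hbound : ∀ s, U' (α s) * β s ≤ U (α s) - U (α s - β s) := by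
    intro s
    have h := deriv_le_slope_aux U U' hconc hderiv (hαβpos s)
      (by linarith [(hβrange s).1] : α s - β s < α s)
    rw [show α s - (α s - β s) = β s by ring] at h
    exact (le_div_iff₀ (hβrange s).1).mp h
  -- integrability of min (U (α - β)) 0
  have hint1 : Integrable (fun s => min (U (α s - β s)) 0) μ := by
    have hfun1 : (fun s => min (U (α s - β s)) 0) =
        fun s => min (G (α s) - min (η s) (G (2 * α s) - G (α s))) 0 := by
      funext s
      have h2α : (0:ℝ) < 2 * α s := by linarith [hαpos s]
      rw [hGeq _ (hαpos s), hGeq _ h2α]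
      congr 1
      linarith [hβeq s]
    have hmeas1 : Measurable (fun s => min (U (α s - β s)) 0) := by
      rw [hfun1]
      exact ((hG.comp hαm).sub
        (hηm.min ((hG.comp (hαm.const_mul 2)).sub (hG.comp hαm)))).min measurable_const
    refine Integrable.mono' (hUαint.add hηint) hmeas1.aestronglyMeasurable ?_
    refine Filter.Eventually.of_forall (fun s => ?_)
    have hveq : U (α s - β s) = U (α s) - min (η s) (U (2 * α s) - U (α s)) := by
      linarith [hβeq s]
    have habs : |min (U (α s - β s)) 0| ≤ |U (α s - β s)| := by
      rcases min_choice (U (α s - β s)) 0 with h | h <;> rw [h] <;> simp [abs_nonneg]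
    have htri : |U (α s - β s)| ≤ |U (α s)| + |min (η s) (U (2 * α s) - U (α s))| := by
      rw [hveq]
      calc |U (α s) - min (η s) (U (2 * α s) - U (α s))|
          = |U (α s) + -(min (η s) (U (2 * α s) - U (α s)))| := by rw [sub_eq_add_neg]
        _ ≤ |U (α s)| + |-(min (η s) (U (2 * α s) - U (α s)))| := abs_add_le _ _
        _ = |U (α s)| + |min (η s) (U (2 * α s) - U (α s))| := by rw [abs_neg]
    have hmη : |min (η s) (U (2 * α s) - U (α s))| ≤ η s := by
      rw [abs_of_pos (hmpos s)]
      exact min_le_left _ _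
    calc ‖min (U (α s - β s)) 0‖ = |min (U (α s - β s)) 0| := rfl
      _ ≤ |U (α s)| + η s := by linarith
  -- integrability of U'(α) β
  have hint2 : Integrable (fun s => U' (α s) * β s) μ := by
    have hfun2 : (fun s => U' (α s) * β s) = fun s => G' (α s) * β s := by
      funext s
      rw [hG'eq _ (hαpos s)]
    have hmeas2 : Measurable (fun s => U' (α s) * β s) := by
      rw [hfun2]
      exact (hG'.comp hαm).mul hβmeas
    refine hηint.mono hmeas2.aestronglyMeasurable ?_
    refine Filter.Eventually.of_forall (fun s => ?_)
    have h0 : 0 ≤ U' (α s) * β s :=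
      mul_nonneg (deriv_nonneg_aux U U' hmono hderiv (hαpos s)) (hβrange s).1.le
    have h1 : U' (α s) * β s ≤ η s := by
      have := hbound s
      have h2 := hβeq s
      have h3 : min (η s) (U (2 * α s) - U (α s)) ≤ η s := min_le_left _ _
      linarith
    rw [Real.norm_eq_abs, Real.norm_eq_abs, abs_of_nonneg h0, abs_of_pos (hηpos s)]
    exact h1
  exact ⟨β, hβmeas, hβrange, hβeq, huniq, hint1, hbound, hint2⟩
end
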